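/- arXiv:2410.11312 — 5 statements merged into one kernel-verified Lean document; each statement's English description precedes it below -/
import Mathlib

section
/- Let f^U : ℝ^m × ℝ^n → ℝ be continuously differentiable, let f^L : ℝ^m × ℝ^n → ℝ be twice continuously differentiable, and let g : ℝ^m → ℝ^n be a differentiable function such that for every x, g(x) is a global minimizer of y ↦ f^L(x, y). For (x, y) let G(x, y) ∈ ℝ^n be the gradient of y' ↦ f^L(x, y') at y, let f^L_YY(x, y) : ℝ^n → ℝ^n be the derivative of y' ↦ G(x, y') at y, and let f^L_XY(x, y) : ℝ^m → ℝ^n be the derivative of x' ↦ G(x', y) at x. Assume f^L_YY(x, g(x)) is invertible for every x. Then the function F(x) = f^U(x, g(x)) is differentiable and ∇F(x) = ∇_x f^U(x, g(x)) - (f^L_XY(x, g(x)))* ((f^L_YY(x, g(x)))⁻¹ ∇_y f^U(x, g(x))), where ∇_x f^U and ∇_y f^U are the gradients of f^U in its first and second arguments and (·)* denotes the adjoint with respect to the Euclidean inner products. -/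
open InnerProductSpace ContinuousLinearMap

noncomputable def dualIsoR (V : Type*) [NormedAddCommGroup V] [InnerProductSpace ℝ V]
    [CompleteSpace V] : StrongDual ℝ V ≃L[ℝ] V :=
  { toLinearEquiv :=
    { toFun := (toDual ℝ V).symm
      map_add' := fun x y => map_add _ x y
      map_smul' := fun c x => by simp
      invFun := toDual ℝ V
      left_inv := fun x => (toDual ℝ V).apply_symm_apply x
      right_inv := fun x => (toDual ℝ V).symm_apply_apply x }
    continuous_toFun := (toDual ℝ V).symm.continuous
    continuous_invFun := (toDual ℝ V).continuous }

section helpers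

variable {V : Type*} [NormedAddCommGroup V] [InnerProductSpace ℝ V] [CompleteSpace V]

lemma gradient_eq_dualIsoR (h : V → ℝ) : gradient h = fun z => dualIsoR V (fderiv ℝ h z) := rfl

lemma inner_dualIsoR (L : StrongDual ℝ V) (v : V) : ⟪dualIsoR V L, v⟫_ℝ = L v :=
  toDual_symm_apply

lemma fderiv_gradient_eq (h : V → ℝ) (y : V) :
    fderiv ℝ (gradient h) y
      = ((dualIsoR V : StrongDual ℝ V →L[ℝ] V)).comp (fderiv ℝ (fderiv ℝ h) y) := by
  rw [gradient_eq_dualIsoR]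
  exact (dualIsoR V).comp_fderiv

lemma fderiv_gradient_symm (h : V → ℝ) (hh : ContDiff ℝ 2 h) (y u v : V) :
    ⟪fderiv ℝ (gradient h) y u, v⟫_ℝ = ⟪fderiv ℝ (gradient h) y v, u⟫_ℝ := by
  rw [fderiv_gradient_eq]
  show ⟪dualIsoR V (fderiv ℝ (fderiv ℝ h) y u), v⟫_ℝ
    = ⟪dualIsoR V (fderiv ℝ (fderiv ℝ h) y v), u⟫_ℝ
  rw [inner_dualIsoR, inner_dualIsoR]
  exact (hh.contDiffAt.isSymmSndFDerivAt (by norm_num)) u v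

end helpers

/-- **Bilevel hypergradient formula.** If `g x` globally minimizes
`y ↦ f^L (x, y)` and the lower-level Hessian `f^L_YY (x, g x)` is invertible
(witnessed by the continuous linear equivalence `A x`), then
`F x = f^U (x, g x)` is differentiable with
`∇F(x) = ∇_x f^U - (f^L_XY)* ((f^L_YY)⁻¹ ∇_y f^U)` at `(x, g x)`. -/
theorem bilevel_hypergradient {m n : ℕ}
    (fU : EuclideanSpace ℝ (Fin m) × EuclideanSpace ℝ (Fin n) → ℝ)
    (hfU : ContDiff ℝ 1 fU)
    (fL : EuclideanSpace ℝ (Fin m) × EuclideanSpace ℝ (Fin n) → ℝ)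
    (hfL : ContDiff ℝ 2 fL)
    (g : EuclideanSpace ℝ (Fin m) → EuclideanSpace ℝ (Fin n))
    (hg : Differentiable ℝ g)
    (hmin : ∀ x y, fL (x, g x) ≤ fL (x, y))
    (A : EuclideanSpace ℝ (Fin m) →
      (EuclideanSpace ℝ (Fin n) ≃L[ℝ] EuclideanSpace ℝ (Fin n)))
    (hA : ∀ x, ((A x : EuclideanSpace ℝ (Fin n) →L[ℝ] EuclideanSpace ℝ (Fin n)))
      = fderiv ℝ (fun y' => gradient (fun y'' => fL (x, y'')) y') (g x)) :
    Differentiable ℝ (fun x => fU (x, g x))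
    ∧ ∀ x : EuclideanSpace ℝ (Fin m),
      gradient (fun x' => fU (x', g x')) x
        = gradient (fun x' => fU (x', g x)) x
          - ContinuousLinearMap.adjoint
              (fderiv ℝ (fun x' => gradient (fun y'' => fL (x', y'')) (g x)) x)
              ((A x).symm (gradient (fun y' => fU (x, y')) (g x))) := by
  have hfLd : Differentiable ℝ fL := hfL.differentiable (by norm_num)
  have hfUd : Differentiable ℝ fU := hfU.differentiable one_ne_zero
  have hdiff : Differentiable ℝ (fun x => fU (x, g x)) :=
    hfUd.comp (differentiable_id.prodMk hg)
  refine ⟨hdiff, fun x => ?_⟩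
  set G : EuclideanSpace ℝ (Fin m) × EuclideanSpace ℝ (Fin n) → EuclideanSpace ℝ (Fin n) :=
    fun p => gradient (fun y => fL (p.1, y)) p.2 with hGdef
  -- G rewritten via the total derivative of fL
  have hGeq : G = fun p => dualIsoR _ ((fderiv ℝ fL p).comp (inr ℝ _ _)) := by
    funext p
    have h1 : HasFDerivAt (fun y => fL (p.1, y)) ((fderiv ℝ fL p).comp (inr ℝ _ _)) p.2 :=
      (hfLd p).hasFDerivAt.comp p.2 (hasFDerivAt_prodMk_right p.1 p.2)
    show gradient (fun y => fL (p.1, y)) p.2 = _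
    rw [show gradient (fun y => fL (p.1, y)) p.2
        = dualIsoR _ (fderiv ℝ (fun y => fL (p.1, y)) p.2) from rfl, h1.fderiv]
  have hG1 : ContDiff ℝ 1 G := by
    rw [hGeq]
    exact ((dualIsoR (EuclideanSpace ℝ (Fin n))).toContinuousLinearMap.contDiff).comp
      ((hfL.fderiv_right (m := 1) (by norm_num)).clm_comp contDiff_const)
  have hGdiff : Differentiable ℝ G := hG1.differentiable one_ne_zero
  -- first-order condition
  have hG0 : ∀ z, G (z, g z) = 0 := by
    intro z
    have hloc : IsLocalMin (fun y => fL (z, y)) (g z) :=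
      Filter.Eventually.of_forall (fun y => hmin z y)
    show gradient (fun y => fL (z, y)) (g z) = 0
    rw [show gradient (fun y => fL (z, y)) (g z)
        = dualIsoR _ (fderiv ℝ (fun y => fL (z, y)) (g z)) from rfl,
      hloc.fderiv_eq_zero, map_zero]
  -- chain rule on the identity G (x', g x') = 0
  have hprodD : HasFDerivAt (fun x' => (x', g x'))
      ((ContinuousLinearMap.id ℝ _).prod (fderiv ℝ g x)) x :=
    (hasFDerivAt_id x).prodMk (hg x).hasFDerivAt
  have hchain : HasFDerivAt (fun x' => G (x', g x'))
      ((fderiv ℝ G (x, g x)).comp ((ContinuousLinearMap.id ℝ _).prod (fderiv ℝ g x))) x :=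
    (hGdiff (x, g x)).hasFDerivAt.comp (g := G) x hprodD
  have hzero : (fderiv ℝ G (x, g x)).comp
      ((ContinuousLinearMap.id ℝ _).prod (fderiv ℝ g x)) = 0 := by
    have h0 : (fun x' => G (x', g x')) = fun _ => (0 : EuclideanSpace ℝ (Fin n)) := funext hG0
    have h1 := hchain.fderiv
    rw [h0, fderiv_const_apply] at h1
    exact h1.symm
  -- partial derivatives of G
  have hBeq : fderiv ℝ (fun x' => gradient (fun y'' => fL (x', y'')) (g x)) x
      = (fderiv ℝ G (x, g x)).comp (inl ℝ _ _) :=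
    ((hGdiff (x, g x)).hasFDerivAt.comp (g := G) (f := fun e => (e, g x)) x (hasFDerivAt_prodMk_left x (g x))).fderiv
  have hAeq : ((A x : EuclideanSpace ℝ (Fin n) →L[ℝ] EuclideanSpace ℝ (Fin n)))
      = (fderiv ℝ G (x, g x)).comp (inr ℝ _ _) := by
    rw [hA x]
    exact ((hGdiff (x, g x)).hasFDerivAt.comp (g := G) (g x) (hasFDerivAt_prodMk_right x (g x))).fderiv
  -- implicit function formula for the derivative of g
  have hDg : ∀ v, fderiv ℝ g x v
      = -(A x).symm ((fderiv ℝ G (x, g x)) (v, 0)) := by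
    intro v
    have h1 : (fderiv ℝ G (x, g x)) (v, fderiv ℝ g x v) = 0 := by
      have := congrArg (fun (T : _ →L[ℝ] EuclideanSpace ℝ (Fin n)) => T v) hzero
      simpa using this
    have h2 : (fderiv ℝ G (x, g x)) (v, 0) + (A x) (fderiv ℝ g x v) = 0 := by
      have hra : (A x) (fderiv ℝ g x v)
          = (fderiv ℝ G (x, g x)) (0, fderiv ℝ g x v) := by
        have := congrArg (fun (T : _ →L[ℝ] EuclideanSpace ℝ (Fin n)) =>
          T (fderiv ℝ g x v)) hAeq
        simpa using this
      rw [hra, ← map_add]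
      simpa using h1
    have h3 : (A x) (fderiv ℝ g x v) = -((fderiv ℝ G (x, g x)) (v, 0)) :=
      eq_neg_of_add_eq_zero_right h2
    have h4 := congrArg (A x).symm h3
    simpa using h4
  -- partial derivatives of the upper-level objective
  have hUchain : fderiv ℝ (fun x' => fU (x', g x')) x
      = (fderiv ℝ fU (x, g x)).comp ((ContinuousLinearMap.id ℝ _).prod (fderiv ℝ g x)) :=
    ((hfUd (x, g x)).hasFDerivAt.comp (g := fU) x hprodD).fderiv
  have hUx : fderiv ℝ (fun x' => fU (x', g x)) x
      = (fderiv ℝ fU (x, g x)).comp (inl ℝ _ _) :=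
    ((hfUd (x, g x)).hasFDerivAt.comp (g := fU) x (hasFDerivAt_prodMk_left x (g x))).fderiv
  have hUy : fderiv ℝ (fun y' => fU (x, y')) (g x)
      = (fderiv ℝ fU (x, g x)).comp (inr ℝ _ _) :=
    ((hfUd (x, g x)).hasFDerivAt.comp (g := fU) (g x) (hasFDerivAt_prodMk_right x (g x))).fderiv
  -- self-adjointness of the lower-level Hessian
  have hLx : ContDiff ℝ 2 (fun y => fL (x, y)) := hfL.comp (contDiff_const.prodMk contDiff_id)
  have hAsym : ∀ u w, ⟪(A x) u, w⟫_ℝ = ⟪(A x) w, u⟫_ℝ := by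
    have h1 : ∀ u : EuclideanSpace ℝ (Fin n),
        (A x) u = fderiv ℝ (gradient (fun y => fL (x, y))) (g x) u := by
      intro u
      show ((A x : EuclideanSpace ℝ (Fin n) →L[ℝ] EuclideanSpace ℝ (Fin n))) u = _
      rw [hA x]
    intro u w
    rw [h1 u, h1 w]
    exact fderiv_gradient_symm _ hLx (g x) u w
  have hAsymInv : ∀ a b : EuclideanSpace ℝ (Fin n),
      ⟪(A x).symm a, b⟫_ℝ = ⟪a, (A x).symm b⟫_ℝ := by
    intro a b
    calc ⟪(A x).symm a, b⟫_ℝ = ⟪(A x).symm a, (A x) ((A x).symm b)⟫_ℝ := by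
          rw [ContinuousLinearEquiv.apply_symm_apply]
      _ = ⟪(A x) ((A x).symm b), (A x).symm a⟫_ℝ := real_inner_comm _ _
      _ = ⟪(A x) ((A x).symm a), (A x).symm b⟫_ℝ := hAsym _ _
      _ = ⟪a, (A x).symm b⟫_ℝ := by rw [ContinuousLinearEquiv.apply_symm_apply]
  -- final computation
  refine ext_inner_right ℝ fun v => ?_
  have e1 : ⟪gradient (fun x' => fU (x', g x')) x, v⟫_ℝ
      = fderiv ℝ (fun x' => fU (x', g x')) x v := inner_dualIsoR _ _
  have e2 : ⟪gradient (fun x' => fU (x', g x)) x, v⟫_ℝ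
      = fderiv ℝ (fun x' => fU (x', g x)) x v := inner_dualIsoR _ _
  have e3 : ∀ w, ⟪gradient (fun y' => fU (x, y')) (g x), w⟫_ℝ
      = fderiv ℝ (fun y' => fU (x, y')) (g x) w := fun w => inner_dualIsoR _ _
  rw [inner_sub_left, e1, e2, adjoint_inner_left, hUchain, hUx, hBeq]
  simp only [ContinuousLinearMap.comp_apply, ContinuousLinearMap.prod_apply,
    ContinuousLinearMap.coe_id', id_eq, inl_apply]
  have hsplit : (fderiv ℝ fU (x, g x)) (v, fderiv ℝ g x v)
      = (fderiv ℝ fU (x, g x)) (v, 0) + (fderiv ℝ fU (x, g x)) (0, fderiv ℝ g x v) := by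
    rw [← map_add]
    norm_num
  have hterm : (fderiv ℝ fU (x, g x)) (0, fderiv ℝ g x v)
      = -⟪(A x).symm (gradient (fun y' => fU (x, y')) (g x)),
          (fderiv ℝ G (x, g x)) (v, 0)⟫_ℝ := by
    have h5 : (fderiv ℝ fU (x, g x)) (0, fderiv ℝ g x v)
        = ⟪gradient (fun y' => fU (x, y')) (g x), fderiv ℝ g x v⟫_ℝ := by
      rw [e3, hUy]
      simp
    rw [h5, hDg v, inner_neg_right, hAsymInv]
  rw [hsplit, hterm]
  ring
end

section
/- Consider an n-level hierarchical system: an integer n ≥ 2, continuously differentiable functions G_i : ℝ^{i-1} → ℝ for 2 ≤ i ≤ n, and trajectory functions X_1, ..., X_n : ℝ → ℝ defined by X_1(t) = t and X_i(t) = G_i(X_1(t), ..., X_{i-1}(t)); write ∂x_i/∂x_j(t) for the j-th partial derivative of G_i evaluated at (X_1(t), ..., X_{i-1}(t)). Suppose there are K ≥ 0 and S ≥ 0 such that every partial derivative of every G_i is bounded in absolute value by K everywhere, and for all 2 ≤ i ≤ n and 1 ≤ j < i the map t ↦ ∂x_i/∂x_j(t) is S-Lipschitz; set J = max(K, 1).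 Then for all y, z ∈ ℝ and every 2 ≤ i ≤ n, |X_i'(y) - X_i'(z)| ≤ (i-1) S ((i-1) J)^{i-1} |y - z|. -/
private lemma pow_aux_tdlm {J : ℝ} (hJ : 1 ≤ J) {a b : ℕ} (hab : a ≤ b) :
    ((a : ℝ) * J) ^ a ≤ ((b : ℝ) * J) ^ b := by
  have hJ0 : (0 : ℝ) ≤ J := zero_le_one.trans hJ
  have h0 : (0 : ℝ) ≤ (a : ℝ) * J := by positivity
  have hab' : (a : ℝ) * J ≤ (b : ℝ) * J :=
    mul_le_mul_of_nonneg_right (by exact_mod_cast hab) hJ0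
  calc ((a : ℝ) * J) ^ a ≤ ((b : ℝ) * J) ^ a := pow_le_pow_left₀ h0 hab' a
    _ ≤ ((b : ℝ) * J) ^ b := by
        rcases Nat.eq_zero_or_pos b with hb | hb
        · have ha : a = 0 := by omega
          subst hb; subst ha; simp
        · refine pow_le_pow_right₀ ?_ hab
          have hb1 : (1 : ℝ) ≤ (b : ℝ) := by exact_mod_cast hb
          nlinarith

/-- **Lemma: Lipschitz estimate for the total derivative `dx_i/dx_1` in an
`n`-level hierarchical system.** With trajectories `X 1 t = t` and
`X i t = G i (X 1 t, …, X (i-1) t)`, if every partial derivative of every `G i`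
is bounded by `K`, every map `t ↦ ∂x_i/∂x_j(t)` is `S`-Lipschitz, and
`J = max K 1`, then `|X i '(y) - X i '(z)| ≤ (i-1) S ((i-1) J)^(i-1) |y - z|`. -/
theorem total_derivative_lipschitz_multilevel
    (n : ℕ) (hn : 2 ≤ n)
    (G : (i : ℕ) → (Fin (i - 1) → ℝ) → ℝ)
    (hG : ∀ i, 2 ≤ i → i ≤ n → ContDiff ℝ 1 (G i))
    (X : ℕ → ℝ → ℝ)
    (hX1 : ∀ t, X 1 t = t)
    (hXi : ∀ i, 2 ≤ i → i ≤ n → ∀ t,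
      X i t = G i (fun k : Fin (i - 1) => X (k.val + 1) t))
    (K : ℝ) (hK : 0 ≤ K)
    (hbd : ∀ i, 2 ≤ i → i ≤ n → ∀ (v : Fin (i - 1) → ℝ) (j : Fin (i - 1)),
      |fderiv ℝ (G i) v (Pi.single j 1)| ≤ K)
    (S : ℝ) (hS : 0 ≤ S)
    (hlip : ∀ i, 2 ≤ i → i ≤ n → ∀ (j : Fin (i - 1)) (y z : ℝ),
      |fderiv ℝ (G i) (fun k : Fin (i - 1) => X (k.val + 1) y) (Pi.single j 1)
        - fderiv ℝ (G i) (fun k : Fin (i - 1) => X (k.val + 1) z) (Pi.single j 1)|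
        ≤ S * |y - z|)
    (J : ℝ) (hJ : J = max K 1) :
    ∀ i, 2 ≤ i → i ≤ n → ∀ y z : ℝ,
      |deriv (X i) y - deriv (X i) z|
        ≤ ((i - 1 : ℕ) : ℝ) * S * ((((i - 1 : ℕ) : ℝ)) * J) ^ (i - 1) * |y - z| := by
  have hJ1 : (1 : ℝ) ≤ J := hJ ▸ le_max_right K 1
  have hJ0 : (0 : ℝ) ≤ J := zero_le_one.trans hJ1
  have hKJ : K ≤ J := hJ ▸ le_max_left K 1
  suffices H : ∀ i, 1 ≤ i → i ≤ n →
      (∀ t, HasDerivAt (X i) (deriv (X i) t) t) ∧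
      (∀ t, |deriv (X i) t| ≤ (((i - 1 : ℕ) : ℝ) * J) ^ (i - 1)) ∧
      (∀ y z : ℝ, |deriv (X i) y - deriv (X i) z|
        ≤ ((i - 1 : ℕ) : ℝ) * S * ((((i - 1 : ℕ) : ℝ)) * J) ^ (i - 1) * |y - z|) by
    intro i h2 hin y z
    exact (H i (by omega) hin).2.2 y z
  intro i
  induction i using Nat.strong_induction_on with
  | _ i IH =>
  intro h1 hin
  rcases eq_or_lt_of_le h1 with h | h2
  · -- base case i = 1
    subst h
    have hX : X 1 = fun t => t := funext hX1
    have hd : ∀ t : ℝ, HasDerivAt (X 1) 1 t := by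
      rw [hX]; exact fun t => hasDerivAt_id' (x := t)
    have hderiv1 : ∀ t : ℝ, deriv (X 1) t = 1 := fun t => (hd t).deriv
    refine ⟨fun t => by rw [hderiv1 t]; exact hd t, ?_, ?_⟩
    · intro t; simp [hderiv1]
    · intro y z; simp [hderiv1]
  · -- inductive step i ≥ 2
    have h2i : 2 ≤ i := h2
    obtain ⟨p, rfl⟩ : ∃ p, i = p + 2 := ⟨i - 2, by omega⟩
    have hi1 : p + 2 - 1 = p + 1 := rfl
    -- induction hypotheses for the lower levels
    have hIH : ∀ k : Fin (p + 1),
        (∀ t, HasDerivAt (X (k.1 + 1)) (deriv (X (k.1 + 1)) t) t) ∧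
        (∀ t, |deriv (X (k.1 + 1)) t| ≤ ((k.1 : ℝ) * J) ^ k.1) ∧
        (∀ y z : ℝ, |deriv (X (k.1 + 1)) y - deriv (X (k.1 + 1)) z|
          ≤ (k.1 : ℝ) * S * ((k.1 : ℝ) * J) ^ k.1 * |y - z|) := by
      intro k
      have hk := k.2
      have h := IH (k.1 + 1) (by omega) (by omega) (by omega)
      simpa using h
    have hFd : ∀ t : ℝ, HasDerivAt (fun s => fun k : Fin (p + 1) => X (k.1 + 1) s)
        (fun k : Fin (p + 1) => deriv (X (k.1 + 1)) t) t := fun t =>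
      hasDerivAt_pi.2 fun k => (hIH k).1 t
    have hGdiff : Differentiable ℝ (G (p + 2)) :=
      (hG (p + 2) h2i hin).differentiable one_ne_zero
    have hXeq : X (p + 2) = fun s => G (p + 2) (fun k : Fin (p + 1) => X (k.1 + 1) s) :=
      funext (hXi (p + 2) h2i hin)
    have hXd : ∀ t : ℝ, HasDerivAt (X (p + 2))
        ((fderiv ℝ (G (p + 2)) (fun k : Fin (p + 1) => X (k.1 + 1) t))
          (fun k : Fin (p + 1) => deriv (X (k.1 + 1)) t)) t := by
      intro t
      rw [hXeq]
      exact (hGdiff _).hasFDerivAt.comp_hasDerivAt t (hFd t)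
    have hderiv : ∀ t : ℝ, deriv (X (p + 2)) t
        = ∑ k : Fin (p + 1), deriv (X (k.1 + 1)) t *
            (fderiv ℝ (G (p + 2)) (fun k : Fin (p + 1) => X (k.1 + 1) t))
              (Pi.single k 1) := by
      intro t
      rw [(hXd t).deriv]
      have hv : (fun k : Fin (p + 1) => deriv (X (k.1 + 1)) t)
          = ∑ k : Fin (p + 1), deriv (X (k.1 + 1)) t • (Pi.single k 1 : Fin (p + 1) → ℝ) := by
        funext j
        simp [Finset.sum_apply, Pi.single_apply]
      rw [hv, map_sum]
      simp [smul_eq_mul]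
    -- uniform bounds
    set B : ℝ := (((p + 1 : ℕ) : ℝ) * J) ^ p with hB
    have hB0 : 0 ≤ B := by positivity
    have hpow : ∀ k : Fin (p + 1), ((k.1 : ℝ) * J) ^ k.1 ≤ B := by
      intro k
      have hk : k.1 ≤ p := by omega
      calc ((k.1 : ℝ) * J) ^ k.1 ≤ ((p : ℝ) * J) ^ p := pow_aux_tdlm hJ1 hk
        _ ≤ B := by
            refine pow_le_pow_left₀ (by positivity) ?_ p
            refine mul_le_mul_of_nonneg_right ?_ hJ0
            exact_mod_cast Nat.le_succ p
    have hLbd : ∀ (t : ℝ) (k : Fin (p + 1)),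
        |(fderiv ℝ (G (p + 2)) (fun k : Fin (p + 1) => X (k.1 + 1) t)) (Pi.single k 1)| ≤ K :=
      fun t k => hbd (p + 2) h2i hin _ k
    -- derivative bound
    have hDb : ∀ t : ℝ, |deriv (X (p + 2)) t| ≤ (((p + 1 : ℕ) : ℝ) * J) ^ (p + 1) := by
      intro t
      rw [hderiv t]
      calc |∑ k : Fin (p + 1), deriv (X (k.1 + 1)) t *
              (fderiv ℝ (G (p + 2)) (fun k : Fin (p + 1) => X (k.1 + 1) t)) (Pi.single k 1)|
          ≤ ∑ k : Fin (p + 1), |deriv (X (k.1 + 1)) t *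
              (fderiv ℝ (G (p + 2)) (fun k : Fin (p + 1) => X (k.1 + 1) t)) (Pi.single k 1)| :=
            Finset.abs_sum_le_sum_abs _ _
        _ ≤ ∑ _k : Fin (p + 1), B * J := by
            refine Finset.sum_le_sum fun k _ => ?_
            rw [abs_mul]
            refine mul_le_mul (((hIH k).2.1 t).trans (hpow k))
              ((hLbd t k).trans hKJ) (abs_nonneg _) hB0
        _ = ((p + 1 : ℕ) : ℝ) * (B * J) := by
            simp [Finset.sum_const, Finset.card_univ, nsmul_eq_mul]
        _ = (((p + 1 : ℕ) : ℝ) * J) ^ (p + 1) := by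
            rw [hB, pow_succ]; ring
    -- Lipschitz bound
    have hLip : ∀ y z : ℝ, |deriv (X (p + 2)) y - deriv (X (p + 2)) z|
        ≤ ((p + 1 : ℕ) : ℝ) * S * ((((p + 1 : ℕ) : ℝ)) * J) ^ (p + 1) * |y - z| := by
      intro y z
      rw [hderiv y, hderiv z, ← Finset.sum_sub_distrib]
      calc |∑ k : Fin (p + 1), (deriv (X (k.1 + 1)) y *
              (fderiv ℝ (G (p + 2)) (fun k : Fin (p + 1) => X (k.1 + 1) y)) (Pi.single k 1)
            - deriv (X (k.1 + 1)) z *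
              (fderiv ℝ (G (p + 2)) (fun k : Fin (p + 1) => X (k.1 + 1) z)) (Pi.single k 1))|
          ≤ ∑ k : Fin (p + 1), |deriv (X (k.1 + 1)) y *
              (fderiv ℝ (G (p + 2)) (fun k : Fin (p + 1) => X (k.1 + 1) y)) (Pi.single k 1)
            - deriv (X (k.1 + 1)) z *
              (fderiv ℝ (G (p + 2)) (fun k : Fin (p + 1) => X (k.1 + 1) z)) (Pi.single k 1)| :=
            Finset.abs_sum_le_sum_abs _ _
        _ ≤ ∑ _k : Fin (p + 1), S * |y - z| * (B * (((p + 1 : ℕ) : ℝ) * J)) := by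
            refine Finset.sum_le_sum fun k _ => ?_
            set Ly : ℝ := (fderiv ℝ (G (p + 2)) (fun k : Fin (p + 1) => X (k.1 + 1) y))
              (Pi.single k 1) with hLy
            set Lz : ℝ := (fderiv ℝ (G (p + 2)) (fun k : Fin (p + 1) => X (k.1 + 1) z))
              (Pi.single k 1) with hLz
            set cy : ℝ := deriv (X (k.1 + 1)) y with hcy
            set cz : ℝ := deriv (X (k.1 + 1)) z with hcz
            have ha1 : |cy| ≤ B := ((hIH k).2.1 y).trans (hpow k)
            have ha2 : |Ly - Lz| ≤ S * |y - z| := hlip (p + 2) h2i hin k y z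
            have ha3 : |cy - cz| ≤ (p : ℝ) * S * B * |y - z| := by
              refine ((hIH k).2.2 y z).trans ?_
              have hk : (k.1 : ℝ) ≤ (p : ℝ) := by exact_mod_cast (by omega : k.1 ≤ p)
              refine mul_le_mul_of_nonneg_right ?_ (abs_nonneg _)
              exact mul_le_mul (mul_le_mul_of_nonneg_right hk hS) (hpow k)
                (by positivity) (by positivity)
            have ha4 : |Lz| ≤ J := (hLbd z k).trans hKJ
            have hsplit : cy * Ly - cz * Lz = cy * (Ly - Lz) + (cy - cz) * Lz := by ring
            calc |cy * Ly - cz * Lz| ≤ |cy * (Ly - Lz)| + |(cy - cz) * Lz| := by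
                  rw [hsplit]; exact abs_add_le _ _
              _ = |cy| * |Ly - Lz| + |cy - cz| * |Lz| := by rw [abs_mul, abs_mul]
              _ ≤ B * (S * |y - z|) + ((p : ℝ) * S * B * |y - z|) * J := by
                  refine add_le_add (mul_le_mul ha1 ha2 (abs_nonneg _) hB0)
                    (mul_le_mul ha3 ha4 (abs_nonneg _) ?_)
                  positivity
              _ ≤ S * |y - z| * (B * (((p + 1 : ℕ) : ℝ) * J)) := by
                  have hyz : (0 : ℝ) ≤ |y - z| := abs_nonneg _
                  have hp0 : (0 : ℝ) ≤ (p : ℝ) := Nat.cast_nonneg p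
                  have hcast : ((p + 1 : ℕ) : ℝ) = (p : ℝ) + 1 := by push_cast; ring
                  rw [hcast]
                  nlinarith [mul_nonneg (mul_nonneg hS hyz) hB0,
                    mul_nonneg (mul_nonneg (mul_nonneg hp0 hS) hB0) hyz]
        _ = ((p + 1 : ℕ) : ℝ) * (S * |y - z| * (B * (((p + 1 : ℕ) : ℝ) * J))) := by
            simp [Finset.sum_const, Finset.card_univ, nsmul_eq_mul]
        _ = ((p + 1 : ℕ) : ℝ) * S * ((((p + 1 : ℕ) : ℝ)) * J) ^ (p + 1) * |y - z| := by
            rw [hB, pow_succ]; ring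
    exact ⟨fun t => by rw [(hXd t).deriv]; exact hXd t, hDb, hLip⟩
end

section
/- Consider an n-level hierarchical system: an integer n ≥ 2, continuously differentiable functions G_i : ℝ^{i-1} → ℝ for 2 ≤ i ≤ n, and trajectory functions X_1, ..., X_n : ℝ → ℝ defined by X_1(t) = t and X_i(t) = G_i(X_1(t), ..., X_{i-1}(t)); write ∂x_i/∂x_j(t) for the j-th partial derivative of G_i evaluated at (X_1(t), ..., X_{i-1}(t)). Let f₁ : ℝ^n → ℝ be continuously differentiable and define F(t) = f₁(X_1(t), ..., X_n(t)). Suppose there are constants K, S, N₀, M ≥ 0 such that: every partial derivative of every G_i is bounded in absolute value by K; for all 2 ≤ i ≤ n and 1 ≤ j < i the map t ↦ ∂x_i/∂x_j(t) is S-Lipschitz; every partial derivative of f₁ is bounded in absolute value by N₀; and for every 1 ≤ j ≤ n the map t ↦ (∂f₁/∂x_j)(X_1(t), ..., X_n(t)) is M-Lipschitz. Set J = max(M, N₀, K, S, 1). Then for all y, z ∈ ℝ, |F'(y) - F'(z)| ≤ n^{n+1} J^{n+1} |y - z|. -/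
private 
lemma clm_apply_eq_sum' {m : ℕ} (L : (Fin m → ℝ) →L[ℝ] ℝ) (w : Fin m → ℝ) :
    L w = ∑ k : Fin m, w k * L (Pi.single k 1) := by
  have hw : w = ∑ k : Fin m, w k • (Pi.single k 1 : Fin m → ℝ) := by
    funext j
    simp [Finset.sum_apply, Pi.single_apply]
  conv_lhs => rw [hw]
  rw [map_sum]
  simp [smul_eq_mul]

lemma prod_diff_bound' (a b c d A B L S' : ℝ) (hA : 0 ≤ A) (hB : 0 ≤ B)
    (ha : |a| ≤ A) (hd : |d| ≤ B) (hbd : |b - d| ≤ L) (hac : |a - c| ≤ S') :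
    |a * b - c * d| ≤ A * L + B * S' := by
  have h : a * b - c * d = a * (b - d) + d * (a - c) := by ring
  rw [h]
  calc |a * (b - d) + d * (a - c)| ≤ |a * (b-d)| + |d * (a-c)| := abs_add_le _ _
    _ = |a| * |b-d| + |d| * |a-c| := by rw [abs_mul, abs_mul]
    _ ≤ A * L + B * S' := by
        have h1 : (0:ℝ) ≤ |b - d| := abs_nonneg _
        have h2 : (0:ℝ) ≤ |a - c| := abs_nonneg _
        have := mul_le_mul ha hbd h1 hA
        have := mul_le_mul hd hac h2 hB
        linarith


private lemma hier_key
    (n : ℕ) (hn : 2 ≤ n)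
    (G : (i : ℕ) → (Fin (i - 1) → ℝ) → ℝ)
    (hG : ∀ i, 2 ≤ i → i ≤ n → ContDiff ℝ 1 (G i))
    (X : ℕ → ℝ → ℝ)
    (hX1 : ∀ t, X 1 t = t)
    (hXi : ∀ i, 2 ≤ i → i ≤ n → ∀ t,
      X i t = G i (fun k : Fin (i - 1) => X (k.val + 1) t))
    (K : ℝ) (hK : 0 ≤ K)
    (hbd : ∀ i, 2 ≤ i → i ≤ n → ∀ (v : Fin (i - 1) → ℝ) (j : Fin (i - 1)),
      |fderiv ℝ (G i) v (Pi.single j 1)| ≤ K)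
    (S : ℝ) (hS : 0 ≤ S)
    (hlipG : ∀ i, 2 ≤ i → i ≤ n → ∀ (j : Fin (i - 1)) (y z : ℝ),
      |fderiv ℝ (G i) (fun k : Fin (i - 1) => X (k.val + 1) y) (Pi.single j 1)
        - fderiv ℝ (G i) (fun k : Fin (i - 1) => X (k.val + 1) z) (Pi.single j 1)|
        ≤ S * |y - z|)
    (J : ℝ) (hJ1 : 1 ≤ J) (hKJ : K ≤ J) (hSJ : S ≤ J) :
    ∀ i, 1 ≤ i → i ≤ n →
      (∀ t : ℝ, HasDerivAt (X i) (deriv (X i) t) t) ∧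
      (∀ t : ℝ, |deriv (X i) t| ≤ ((n : ℝ) * J) ^ (i - 1)) ∧
      (∀ y z : ℝ, |deriv (X i) y - deriv (X i) z| ≤
          ((i : ℝ) - 1) * (n : ℝ) ^ (i - 1) * J ^ i * |y - z|) := by
  have hJ0 : (0:ℝ) ≤ J := le_trans zero_le_one hJ1
  have hn1 : (1:ℝ) ≤ (n:ℝ) := by exact_mod_cast Nat.one_le_of_lt hn
  have hnJ1 : (1:ℝ) ≤ (n:ℝ) * J := one_le_mul_of_one_le_of_one_le hn1 hJ1
  intro i
  induction i using Nat.strong_induction_on with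
  | _ i IH =>
    intro h1 hin
    match i, h1, hin with
    | 1, _, _ =>
      have hXid : X 1 = fun t => t := funext hX1
      have hd : ∀ t : ℝ, HasDerivAt (X 1) 1 t := by
        intro t; rw [hXid]; exact hasDerivAt_id t
      have hdv : ∀ t : ℝ, deriv (X 1) t = 1 := fun t => (hd t).deriv
      refine ⟨fun t => by rw [hdv t]; exact hd t, fun t => ?_, fun y z => ?_⟩
      · rw [hdv t]; simp
      · rw [hdv y, hdv z]; simp
    | (p + 2), _, hin =>
      have h2 : 2 ≤ p + 2 := by omega
      -- index type : Fin (p+1)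
      set m := p + 1 with hm
      have hd1 : ∀ k : Fin m, k.val + 1 < p + 2 := fun k => by omega
      have hIH : ∀ k : Fin m,
          (∀ t : ℝ, HasDerivAt (X (k.val+1)) (deriv (X (k.val+1)) t) t) ∧
          (∀ t : ℝ, |deriv (X (k.val+1)) t| ≤ ((n : ℝ) * J) ^ (k.val)) ∧
          (∀ y z : ℝ, |deriv (X (k.val+1)) y - deriv (X (k.val+1)) z| ≤
              ((k.val : ℝ)) * (n : ℝ) ^ (k.val) * J ^ (k.val+1) * |y - z|) := by
        intro k
        have := IH (k.val+1) (hd1 k) (by omega) (by omega)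
        simpa using this
      -- the inner map
      set Y : ℝ → (Fin m → ℝ) := fun t => fun k : Fin m => X (k.val + 1) t with hY
      have hYd : ∀ t : ℝ, HasDerivAt Y (fun k => deriv (X (k.val+1)) t) t := by
        intro t
        exact hasDerivAt_pi.2 fun k => (hIH k).1 t
      have hGd : ∀ v : Fin m → ℝ, HasFDerivAt (G (p+2)) (fderiv ℝ (G (p+2)) v) v :=
        fun v => (((hG (p+2) h2 hin).differentiable one_ne_zero) v).hasFDerivAt
      have hXeq : X (p+2) = fun t => G (p+2) (Y t) := funext fun t => hXi (p+2) h2 hin t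
      set g : Fin m → ℝ → ℝ := fun k t => fderiv ℝ (G (p+2)) (Y t) (Pi.single k 1) with hg
      have hXd : ∀ t : ℝ, HasDerivAt (X (p+2))
          (∑ k : Fin m, deriv (X (k.val+1)) t * g k t) t := by
        intro t
        have := (hGd (Y t)).comp_hasDerivAt t (hYd t)
        rw [hXeq]
        exact this.congr_deriv (clm_apply_eq_sum' _ _)
      have hdv : ∀ t : ℝ, deriv (X (p+2)) t = ∑ k : Fin m, deriv (X (k.val+1)) t * g k t :=
        fun t => (hXd t).deriv
      have hgbd : ∀ (k : Fin m) (t : ℝ), |g k t| ≤ K := fun k t => hbd (p+2) h2 hin (Y t) k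
      have hglip : ∀ (k : Fin m) (y z : ℝ), |g k y - g k z| ≤ S * |y - z| :=
        fun k y z => hlipG (p+2) h2 hin k y z
      have hnJ0 : (0:ℝ) ≤ (n:ℝ) * J := le_trans zero_le_one hnJ1
      have hnp : ((p:ℝ) + 1) ≤ (n:ℝ) := by exact_mod_cast (by omega : p + 1 ≤ n)
      have hn0 : (0:ℝ) ≤ (n:ℝ) := by linarith
      have hbound : ∀ t : ℝ, |deriv (X (p+2)) t| ≤ ((n:ℝ) * J) ^ (p+1) := by
        intro t
        calc |deriv (X (p+2)) t| = |∑ k : Fin m, deriv (X (k.val+1)) t * g k t| := by rw [hdv]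
          _ ≤ ∑ k : Fin m, |deriv (X (k.val+1)) t * g k t| := Finset.abs_sum_le_sum_abs _ _
          _ ≤ ∑ _k : Fin m, ((n:ℝ)*J) ^ p * J := by
              refine Finset.sum_le_sum fun k _ => ?_
              rw [abs_mul]
              have h1 : |deriv (X (k.val+1)) t| ≤ ((n:ℝ)*J) ^ p :=
                ((hIH k).2.1 t).trans (pow_le_pow_right₀ hnJ1 (by omega))
              have h2 : |g k t| ≤ J := (hgbd k t).trans hKJ
              exact mul_le_mul h1 h2 (abs_nonneg _) (pow_nonneg hnJ0 _)
          _ = ((m:ℝ)) * (((n:ℝ)*J) ^ p * J) := by simp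
          _ ≤ ((n:ℝ)*J) ^ (p+1) := by
              rw [pow_succ]
              have hmc : (m:ℝ) = (p:ℝ) + 1 := by exact_mod_cast rfl
              rw [hmc]
              have hpos : (0:ℝ) ≤ ((n:ℝ)*J)^p * J := mul_nonneg (pow_nonneg hnJ0 p) hJ0
              calc ((p:ℝ)+1) * (((n:ℝ)*J)^p*J) ≤ (n:ℝ) * (((n:ℝ)*J)^p*J) :=
                    mul_le_mul_of_nonneg_right hnp hpos
                _ = ((n:ℝ)*J)^p * ((n:ℝ)*J) := by ring
      refine ⟨fun t => (hXd t).deriv ▸ hXd t, fun t => hbound t, fun y z => ?_⟩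
      have hJp : (0:ℝ) ≤ J ^ (p+2) := pow_nonneg hJ0 _
      have hnpow : (0:ℝ) ≤ (n:ℝ) ^ p := pow_nonneg hn0 _
      calc |deriv (X (p+2)) y - deriv (X (p+2)) z|
          = |∑ k : Fin m, (deriv (X (k.val+1)) y * g k y - deriv (X (k.val+1)) z * g k z)| := by
            rw [hdv, hdv, Finset.sum_sub_distrib]
        _ ≤ ∑ k : Fin m, |deriv (X (k.val+1)) y * g k y - deriv (X (k.val+1)) z * g k z| :=
            Finset.abs_sum_le_sum_abs _ _
        _ ≤ ∑ _k : Fin m, (((n:ℝ)*J) ^ p * (J * |y - z|)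
              + J * ((p:ℝ) * (n:ℝ) ^ p * J ^ (p+1) * |y - z|)) := by
            refine Finset.sum_le_sum fun k _ => ?_
            refine prod_diff_bound' _ _ _ _ _ _ _ _ (pow_nonneg hnJ0 _) hJ0
              (((hIH k).2.1 y).trans (pow_le_pow_right₀ hnJ1 (by omega)))
              ((hgbd k z).trans hKJ) ?_ ?_
            · exact (hglip k y z).trans
                (mul_le_mul_of_nonneg_right hSJ (abs_nonneg _))
            · refine ((hIH k).2.2 y z).trans ?_
              have hk : (k.val : ℝ) ≤ (p:ℝ) := by exact_mod_cast (by omega : k.val ≤ p)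
              have h3 : ((n:ℝ)) ^ k.val ≤ (n:ℝ) ^ p := pow_le_pow_right₀ hn1 (by omega)
              have h4 : J ^ (k.val+1) ≤ J ^ (p+1) := pow_le_pow_right₀ hJ1 (by omega)
              have habs : (0:ℝ) ≤ |y - z| := abs_nonneg _
              have hkk : (0:ℝ) ≤ (k.val : ℝ) := Nat.cast_nonneg _
              have hnk : (0:ℝ) ≤ ((n:ℝ)) ^ k.val := pow_nonneg hn0 _
              have hJk1 : (0:ℝ) ≤ J ^ (k.val+1) := pow_nonneg hJ0 _
              have hJp1 : (0:ℝ) ≤ J ^ (p+1) := pow_nonneg hJ0 _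
              have hnp0 : (0:ℝ) ≤ ((n:ℝ)) ^ p := pow_nonneg hn0 _
              have hp0 : (0:ℝ) ≤ (p:ℝ) := Nat.cast_nonneg _
              have s1 : (k.val : ℝ) * (n:ℝ)^k.val ≤ (p:ℝ) * (n:ℝ)^p :=
                mul_le_mul hk h3 hnk hp0
              have s2 : (k.val : ℝ) * (n:ℝ)^k.val * J^(k.val+1)
                  ≤ (p:ℝ) * (n:ℝ)^p * J^(p+1) :=
                mul_le_mul s1 h4 hJk1 (mul_nonneg hp0 hnp0)
              exact mul_le_mul_of_nonneg_right s2 habs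
        _ = ((m:ℝ)) * (((n:ℝ)*J) ^ p * (J * |y - z|)
              + J * ((p:ℝ) * (n:ℝ) ^ p * J ^ (p+1) * |y - z|)) := by simp; ring
        _ ≤ (((p+2:ℕ) : ℝ) - 1) * (n:ℝ) ^ (p+1) * J ^ (p+2) * |y - z| := by
            have hm2 : (m:ℝ) = (p:ℝ) + 1 := by exact_mod_cast rfl
            have hpos : (0:ℝ) ≤ ((p:ℝ)+1) * ((n:ℝ)^p * (J^p * |y - z|)) := by
              have := abs_nonneg (y - z)
              have := pow_nonneg hJ0 p
              have := pow_nonneg hn0 p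
              have : (0:ℝ) ≤ (p:ℝ) := Nat.cast_nonneg _
              positivity
            have key2 : J + (p:ℝ) * J^2 ≤ (n:ℝ) * J^2 := by
              have a1 : (0:ℝ) ≤ J * (J - 1) := mul_nonneg hJ0 (by linarith)
              have a2 : (0:ℝ) ≤ ((n:ℝ) - ((p:ℝ)+1)) * J^2 := by
                have := sq_nonneg J
                exact mul_nonneg (by linarith) (by linarith)
              nlinarith [a1, a2]
            calc (m:ℝ) * (((n:ℝ)*J) ^ p * (J * |y - z|)
                  + J * ((p:ℝ) * (n:ℝ) ^ p * J ^ (p+1) * |y - z|))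
                = ((p:ℝ)+1) * ((n:ℝ)^p * (J^p * |y - z|)) * (J + (p:ℝ)*J^2) := by
                  rw [hm2, mul_pow, pow_succ]; ring
              _ ≤ ((p:ℝ)+1) * ((n:ℝ)^p * (J^p * |y - z|)) * ((n:ℝ)*J^2) :=
                  mul_le_mul_of_nonneg_left key2 hpos
              _ = (((p+2:ℕ) : ℝ) - 1) * (n:ℝ) ^ (p+1) * J ^ (p+2) * |y - z| := by
                  push_cast
                  simp only [pow_succ]
                  ring


/-- **Lemma: Lipschitz estimate for the derivative of the reduced upper-level
objective `F(t) = f₁(X 1 t, …, X n t)` of an `n`-level hierarchical system.**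
Under boundedness of the partial derivatives of the best responses `G i` (by `K`)
and of `f₁` (by `N₀`), and `S`- resp. `M`-Lipschitz continuity of the partial
derivatives along the trajectories, with `J = max(M, N₀, K, S, 1)`,
`|F'(y) - F'(z)| ≤ n^(n+1) J^(n+1) |y - z|`. -/
theorem reduced_objective_derivative_lipschitz
    (n : ℕ) (hn : 2 ≤ n)
    (G : (i : ℕ) → (Fin (i - 1) → ℝ) → ℝ)
    (hG : ∀ i, 2 ≤ i → i ≤ n → ContDiff ℝ 1 (G i))
    (X : ℕ → ℝ → ℝ)
    (hX1 : ∀ t, X 1 t = t)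
    (hXi : ∀ i, 2 ≤ i → i ≤ n → ∀ t,
      X i t = G i (fun k : Fin (i - 1) => X (k.val + 1) t))
    (f₁ : (Fin n → ℝ) → ℝ) (hf₁ : ContDiff ℝ 1 f₁)
    (F : ℝ → ℝ) (hF : ∀ t, F t = f₁ (fun j : Fin n => X (j.val + 1) t))
    (K : ℝ) (hK : 0 ≤ K)
    (hbd : ∀ i, 2 ≤ i → i ≤ n → ∀ (v : Fin (i - 1) → ℝ) (j : Fin (i - 1)),
      |fderiv ℝ (G i) v (Pi.single j 1)| ≤ K)
    (S : ℝ) (hS : 0 ≤ S)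
    (hlipG : ∀ i, 2 ≤ i → i ≤ n → ∀ (j : Fin (i - 1)) (y z : ℝ),
      |fderiv ℝ (G i) (fun k : Fin (i - 1) => X (k.val + 1) y) (Pi.single j 1)
        - fderiv ℝ (G i) (fun k : Fin (i - 1) => X (k.val + 1) z) (Pi.single j 1)|
        ≤ S * |y - z|)
    (N₀ : ℝ) (hN₀ : 0 ≤ N₀)
    (hbdf : ∀ (v : Fin n → ℝ) (j : Fin n), |fderiv ℝ f₁ v (Pi.single j 1)| ≤ N₀)
    (M : ℝ) (hM : 0 ≤ M)
    (hlipf : ∀ (j : Fin n) (y z : ℝ),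
      |fderiv ℝ f₁ (fun k : Fin n => X (k.val + 1) y) (Pi.single j 1)
        - fderiv ℝ f₁ (fun k : Fin n => X (k.val + 1) z) (Pi.single j 1)|
        ≤ M * |y - z|)
    (J : ℝ) (hJ : J = max M (max N₀ (max K (max S 1)))) :
    ∀ y z : ℝ,
      |deriv F y - deriv F z| ≤ (n : ℝ) ^ (n + 1) * J ^ (n + 1) * |y - z| := by
  have hJ1 : (1:ℝ) ≤ J := by rw [hJ]; simp [le_max_iff]
  have hKJ : K ≤ J := by rw [hJ]; simp [le_max_iff]
  have hSJ : S ≤ J := by rw [hJ]; simp [le_max_iff]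
  have hMJ : M ≤ J := by rw [hJ]; simp [le_max_iff]
  have hNJ : N₀ ≤ J := by rw [hJ]; simp [le_max_iff]
  have hJ0 : (0:ℝ) ≤ J := le_trans zero_le_one hJ1
  have hn1 : (1:ℝ) ≤ (n:ℝ) := by exact_mod_cast Nat.one_le_of_lt hn
  have hn0 : (0:ℝ) ≤ (n:ℝ) := by linarith
  have hnJ1 : (1:ℝ) ≤ (n:ℝ) * J := one_le_mul_of_one_le_of_one_le hn1 hJ1
  have hnJ0 : (0:ℝ) ≤ (n:ℝ) * J := le_trans zero_le_one hnJ1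
  have hkey := hier_key n hn G hG X hX1 hXi K hK hbd S hS hlipG J hJ1 hKJ hSJ
  obtain ⟨q, hq⟩ : ∃ q, n = q + 1 := ⟨n - 1, by omega⟩
  intro y z
  have hIHj : ∀ j : Fin n,
      (∀ t : ℝ, HasDerivAt (X (j.val+1)) (deriv (X (j.val+1)) t) t) ∧
      (∀ t : ℝ, |deriv (X (j.val+1)) t| ≤ ((n : ℝ) * J) ^ (j.val)) ∧
      (∀ y z : ℝ, |deriv (X (j.val+1)) y - deriv (X (j.val+1)) z| ≤
          ((j.val : ℝ)) * (n : ℝ) ^ (j.val) * J ^ (j.val+1) * |y - z|) := by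
    intro j
    have := hkey (j.val+1) (by omega) (by omega)
    simpa using this
  set V : ℝ → (Fin n → ℝ) := fun t => fun j : Fin n => X (j.val + 1) t with hV
  have hVd : ∀ t : ℝ, HasDerivAt V (fun j => deriv (X (j.val+1)) t) t :=
    fun t => hasDerivAt_pi.2 fun j => (hIHj j).1 t
  have hFeq : F = fun t => f₁ (V t) := funext fun t => hF t
  set H : Fin n → ℝ → ℝ := fun j t => fderiv ℝ f₁ (V t) (Pi.single j 1) with hH
  have hFd : ∀ t : ℝ, HasDerivAt F (∑ j : Fin n, deriv (X (j.val+1)) t * H j t) t := by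
    intro t
    have hfd : HasFDerivAt f₁ (fderiv ℝ f₁ (V t)) (V t) :=
      ((hf₁.differentiable one_ne_zero) (V t)).hasFDerivAt
    have := hfd.comp_hasDerivAt t (hVd t)
    rw [hFeq]
    exact this.congr_deriv (clm_apply_eq_sum' _ _)
  have hdvF : ∀ t : ℝ, deriv F t = ∑ j : Fin n, deriv (X (j.val+1)) t * H j t :=
    fun t => (hFd t).deriv
  have hHbd : ∀ (j : Fin n) (t : ℝ), |H j t| ≤ N₀ := fun j t => hbdf (V t) j
  have hHlip : ∀ (j : Fin n), |H j y - H j z| ≤ M * |y - z| := fun j => hlipf j y z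
  have habs : (0:ℝ) ≤ |y - z| := abs_nonneg _
  have hq1 : ((q:ℝ) + 1) ≤ (n:ℝ) := by rw [hq]; push_cast; linarith
  calc |deriv F y - deriv F z|
      = |∑ j : Fin n, (deriv (X (j.val+1)) y * H j y - deriv (X (j.val+1)) z * H j z)| := by
        rw [hdvF, hdvF, Finset.sum_sub_distrib]
    _ ≤ ∑ j : Fin n, |deriv (X (j.val+1)) y * H j y - deriv (X (j.val+1)) z * H j z| :=
        Finset.abs_sum_le_sum_abs _ _
    _ ≤ ∑ _j : Fin n, (((n:ℝ)*J) ^ q * (J * |y - z|)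
          + J * ((q:ℝ) * (n:ℝ) ^ q * J ^ (q+1) * |y - z|)) := by
        refine Finset.sum_le_sum fun j _ => ?_
        refine prod_diff_bound' _ _ _ _ _ _ _ _ (pow_nonneg hnJ0 _) hJ0
          (((hIHj j).2.1 y).trans (pow_le_pow_right₀ hnJ1 (by omega)))
          ((hHbd j z).trans hNJ) ?_ ?_
        · exact (hHlip j).trans (mul_le_mul_of_nonneg_right hMJ habs)
        · refine ((hIHj j).2.2 y z).trans ?_
          have hk : (j.val : ℝ) ≤ (q:ℝ) := by exact_mod_cast (by omega : j.val ≤ q)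
          have h3 : ((n:ℝ)) ^ j.val ≤ (n:ℝ) ^ q := pow_le_pow_right₀ hn1 (by omega)
          have h4 : J ^ (j.val+1) ≤ J ^ (q+1) := pow_le_pow_right₀ hJ1 (by omega)
          have hkk : (0:ℝ) ≤ (j.val : ℝ) := Nat.cast_nonneg _
          have hnk : (0:ℝ) ≤ ((n:ℝ)) ^ j.val := pow_nonneg hn0 _
          have hJk1 : (0:ℝ) ≤ J ^ (j.val+1) := pow_nonneg hJ0 _
          have hnp0 : (0:ℝ) ≤ ((n:ℝ)) ^ q := pow_nonneg hn0 _
          have hp0 : (0:ℝ) ≤ (q:ℝ) := Nat.cast_nonneg _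
          have s1 : (j.val : ℝ) * (n:ℝ)^j.val ≤ (q:ℝ) * (n:ℝ)^q :=
            mul_le_mul hk h3 hnk hp0
          have s2 : (j.val : ℝ) * (n:ℝ)^j.val * J^(j.val+1)
              ≤ (q:ℝ) * (n:ℝ)^q * J^(q+1) :=
            mul_le_mul s1 h4 hJk1 (mul_nonneg hp0 hnp0)
          exact mul_le_mul_of_nonneg_right s2 habs
    _ = ((n:ℝ)) * (((n:ℝ)*J) ^ q * (J * |y - z|)
          + J * ((q:ℝ) * (n:ℝ) ^ q * J ^ (q+1) * |y - z|)) := by simp; ring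
    _ ≤ (n : ℝ) ^ (n + 1) * J ^ (n + 1) * |y - z| := by
        have hpos : (0:ℝ) ≤ (n:ℝ) * ((n:ℝ)^q * (J^q * |y - z|)) := by
          have := pow_nonneg hJ0 q
          have := pow_nonneg hn0 q
          positivity
        have key2 : J + (q:ℝ) * J^2 ≤ (n:ℝ) * J^2 := by
          have a1 : (0:ℝ) ≤ J * (J - 1) := mul_nonneg hJ0 (by linarith)
          have a2 : (0:ℝ) ≤ ((n:ℝ) - ((q:ℝ)+1)) * J^2 := by
            have := sq_nonneg J
            exact mul_nonneg (by linarith) (by linarith)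
          nlinarith [a1, a2]
        calc ((n:ℝ)) * (((n:ℝ)*J) ^ q * (J * |y - z|)
              + J * ((q:ℝ) * (n:ℝ) ^ q * J ^ (q+1) * |y - z|))
            = (n:ℝ) * ((n:ℝ)^q * (J^q * |y - z|)) * (J + (q:ℝ)*J^2) := by
              rw [mul_pow, pow_succ]; ring
          _ ≤ (n:ℝ) * ((n:ℝ)^q * (J^q * |y - z|)) * ((n:ℝ)*J^2) :=
              mul_le_mul_of_nonneg_left key2 hpos
          _ = (n : ℝ) ^ (n + 1) * J ^ (n + 1) * |y - z| := by
              rw [hq]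
              push_cast
              simp only [pow_succ]
              ring
end

section
/- Consider an n-level hierarchical system: an integer n ≥ 2, continuously differentiable functions G_i : ℝ^{i-1} → ℝ for 2 ≤ i ≤ n, and trajectory functions X_1, ..., X_n : ℝ → ℝ defined by X_1(t) = t and X_i(t) = G_i(X_1(t), ..., X_{i-1}(t)); write ∂x_i/∂x_j(t) for the j-th partial derivative of G_i evaluated at (X_1(t), ..., X_{i-1}(t)). Let f₁ : ℝ^n → ℝ be continuously differentiable with f₁ ≥ 0 everywhere, and define F(t) = f₁(X_1(t), ..., X_n(t)). Suppose there are constants K, S, N₀, M ≥ 0 such that: every partial derivative of every G_i is bounded in absolute value by K; for all 2 ≤ i ≤ n and 1 ≤ j < i the map t ↦ ∂x_i/∂x_j(t) is S-Lipschitz; every partial derivative of f₁ is bounded in absolute value by N₀; and for every 1 ≤ j ≤ n the map t ↦ (∂f₁/∂x_j)(X_1(t), ..., X_n(t)) is M-Lipschitz. Set J = max(M, N₀, K, S, 1) and L = n^{n+1} J^{n+1}. Fix a step size β with 0 < β < 2/L, an initial point t₀ ∈ ℝ, and define the gradient-descent iterates t_{k+1} = t_k - β F'(t_k). Then for every integer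 N ≥ 1, (1/N) ∑_{i=0}^{N-1} (F'(t_i))² ≤ F(t₀) / (N (β - β² L / 2)); in particular the average squared derivative is O(n^{n+1} J^{n+1} / N). -/
set_option maxHeartbeats 1000000

lemma aux_geom (J : ℝ) (hJ : 1 ≤ J) (m : ℕ) :
    J * ∑ j ∈ Finset.range m, (2*J)^j ≤ (2*J)^m := by
  induction m with
  | zero => simp
  | succ m ih =>
    rw [Finset.sum_range_succ, mul_add, pow_succ]
    have h2 : (0:ℝ) ≤ (2*J)^m := by positivity
    nlinarith [h2]

lemma aux_geom' (J : ℝ) (hJ : 1 ≤ J) (m : ℕ) :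
    J * ∑ j ∈ Finset.range m, ((j:ℝ)+1) * (2*J)^j ≤ (m : ℝ) * (2*J)^m := by
  induction m with
  | zero => simp
  | succ m ih =>
    rw [Finset.sum_range_succ, mul_add, pow_succ]
    have h2 : (0:ℝ) ≤ (2*J)^m := by positivity
    push_cast
    nlinarith [h2, mul_nonneg (by positivity : (0:ℝ) ≤ ((m:ℝ)+1)*(2*J)^m) (sub_nonneg.2 hJ)]

lemma chain_aux {m : ℕ} (g : (Fin m → ℝ) → ℝ) (hg : ContDiff ℝ 1 g)
    (v : ℝ → Fin m → ℝ) (d : Fin m → ℝ) (t₀ : ℝ)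
    (hv : ∀ k, HasDerivAt (fun t => v t k) (d k) t₀) :
    HasDerivAt (fun t => g (v t)) (∑ k, fderiv ℝ g (v t₀) (Pi.single k 1) * d k) t₀ := by
  have hv' : HasDerivAt v d t₀ := hasDerivAt_pi.2 hv
  have hg' : HasFDerivAt g (fderiv ℝ g (v t₀)) (v t₀) :=
    (hg.differentiable one_ne_zero (v t₀)).hasFDerivAt
  have h := hg'.comp_hasDerivAt t₀ hv'
  refine h.congr_deriv (Eq.symm ?_)
  have hd : d = ∑ k, Pi.single k (d k) := by
    rw [Finset.univ_sum_single]
  conv_rhs => rw [hd]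
  rw [map_sum]
  congr 1
  funext k
  have : Pi.single k (d k) = d k • (Pi.single k (1:ℝ) : Fin m → ℝ) := by
    rw [← Pi.single_smul, smul_eq_mul, mul_one]
  rw [this, map_smul, smul_eq_mul, mul_comm]

lemma descent_aux (F : ℝ → ℝ) (D : ℝ → ℝ) (L : ℝ)
    (hFd : ∀ x, HasDerivAt F (D x) x)
    (hlip : ∀ y z, |D y - D z| ≤ L * |y - z|) (x y : ℝ) :
    F y ≤ F x + D x * (y - x) + L / 2 * (y - x) ^ 2 := by
  set v := y - x with hv
  clear_value v
  set h : ℝ → ℝ := fun s => F (x + s * v) - F x - s * (D x * v) - s ^ 2 * (L / 2 * v ^ 2)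
    with hh
  have hder : ∀ s : ℝ, HasDerivAt h
      (D (x + s * v) * v - D x * v - 2 * s * (L / 2 * v ^ 2)) s := by
    intro s
    have h1 : HasDerivAt (fun s : ℝ => x + s * v) v s := by
      simpa using ((hasDerivAt_id s).mul_const v).const_add x
    have h2 : HasDerivAt (fun s : ℝ => F (x + s * v)) (D (x + s * v) * v) s :=
      (hFd (x + s * v)).comp s h1
    have h3 : HasDerivAt (fun s : ℝ => s ^ 2 * (L / 2 * v ^ 2))
        (2 * s * (L / 2 * v ^ 2)) s := by
      have := (hasDerivAt_pow 2 s).mul_const (L / 2 * v ^ 2)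
      refine this.congr_deriv ?_
      ring
    have h4 : HasDerivAt (fun s : ℝ => s * (D x * v)) (D x * v) s := by
      simpa using (hasDerivAt_id s).mul_const (D x * v)
    exact ((h2.sub_const (F x)).sub h4).sub h3
  have hanti : AntitoneOn h (Set.Icc 0 1) := by
    apply antitoneOn_of_deriv_nonpos (convex_Icc 0 1)
    · exact fun s _ => ((hder s).differentiableAt).continuousAt.continuousWithinAt
    · intro s hs
      exact ((hder s).differentiableAt).differentiableWithinAt
    · intro s hs
      rw [interior_Icc] at hs
      rw [(hder s).deriv]
      have hb := hlip (x + s * v) x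
      have h5 : |x + s * v - x| = s * |v| := by
        rw [add_sub_cancel_left, abs_mul, abs_of_pos hs.1]
      rw [h5] at hb
      have h6 : (D (x + s * v) - D x) * v ≤ |D (x + s * v) - D x| * |v| := by
        calc (D (x + s * v) - D x) * v ≤ |(D (x + s * v) - D x) * v| := le_abs_self _
        _ = |D (x + s * v) - D x| * |v| := abs_mul _ _
      have h7 : |v| * |v| = v ^ 2 := by rw [← abs_mul, abs_mul_self, sq]
      have h8 : |D (x + s * v) - D x| * |v| ≤ L * (s * |v|) * |v| :=
        mul_le_mul_of_nonneg_right hb (abs_nonneg v)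
      have h9 : L * (s * |v|) * |v| = 2 * s * (L / 2 * v ^ 2) := by
        rw [← h7]; ring
      have h10 : (D (x + s * v) - D x) * v = D (x + s * v) * v - D x * v := by ring
      linarith [h6, h8]
  have h10 : h 1 ≤ h 0 := hanti (Set.left_mem_Icc.2 zero_le_one)
    (Set.right_mem_Icc.2 zero_le_one) zero_le_one
  simp only [hh] at h10
  have hx1 : x + 1 * v = y := by rw [hv]; ring
  have hx0 : x + 0 * v = x := by ring
  rw [hx1, hx0] at h10
  nlinarith [h10]

/-- **Theorem 3 (general convergence for `n`-level optimization).** For the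
reduced nonnegative upper-level objective `F(t) = f₁(X 1 t, …, X n t)` of an
`n`-level hierarchical system satisfying the boundedness and Lipschitz
assumptions, with `J = max(M, N₀, K, S, 1)`, `L = n^(n+1) J^(n+1)`, step size
`0 < β < 2/L`, and gradient-descent iterates `t_{k+1} = t_k - β F'(t_k)`, the
average squared derivative over the first `N` steps is at most
`F(t₀) / (N (β - β²L/2)) = O(n^(n+1) J^(n+1) / N)`. -/
theorem multilevel_gradient_descent_convergence
    (n : ℕ) (hn : 2 ≤ n)
    (G : (i : ℕ) → (Fin (i - 1) → ℝ) → ℝ)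
    (hG : ∀ i, 2 ≤ i → i ≤ n → ContDiff ℝ 1 (G i))
    (X : ℕ → ℝ → ℝ)
    (hX1 : ∀ t, X 1 t = t)
    (hXi : ∀ i, 2 ≤ i → i ≤ n → ∀ t,
      X i t = G i (fun k : Fin (i - 1) => X (k.val + 1) t))
    (f₁ : (Fin n → ℝ) → ℝ) (hf₁ : ContDiff ℝ 1 f₁) (hf₁0 : ∀ v, 0 ≤ f₁ v)
    (F : ℝ → ℝ) (hF : ∀ t, F t = f₁ (fun j : Fin n => X (j.val + 1) t))
    (K : ℝ) (hK : 0 ≤ K)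
    (hbd : ∀ i, 2 ≤ i → i ≤ n → ∀ (v : Fin (i - 1) → ℝ) (j : Fin (i - 1)),
      |fderiv ℝ (G i) v (Pi.single j 1)| ≤ K)
    (S : ℝ) (hS : 0 ≤ S)
    (hlipG : ∀ i, 2 ≤ i → i ≤ n → ∀ (j : Fin (i - 1)) (y z : ℝ),
      |fderiv ℝ (G i) (fun k : Fin (i - 1) => X (k.val + 1) y) (Pi.single j 1)
        - fderiv ℝ (G i) (fun k : Fin (i - 1) => X (k.val + 1) z) (Pi.single j 1)|
        ≤ S * |y - z|)
    (N₀ : ℝ) (hN₀ : 0 ≤ N₀)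
    (hbdf : ∀ (v : Fin n → ℝ) (j : Fin n), |fderiv ℝ f₁ v (Pi.single j 1)| ≤ N₀)
    (M : ℝ) (hM : 0 ≤ M)
    (hlipf : ∀ (j : Fin n) (y z : ℝ),
      |fderiv ℝ f₁ (fun k : Fin n => X (k.val + 1) y) (Pi.single j 1)
        - fderiv ℝ f₁ (fun k : Fin n => X (k.val + 1) z) (Pi.single j 1)|
        ≤ M * |y - z|)
    (J : ℝ) (hJ : J = max M (max N₀ (max K (max S 1))))
    (L : ℝ) (hL : L = (n : ℝ) ^ (n + 1) * J ^ (n + 1))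
    (β : ℝ) (hβ : 0 < β) (hβ' : β < 2 / L)
    (t : ℕ → ℝ) (ht : ∀ k, t (k + 1) = t k - β * deriv F (t k)) :
    ∀ N : ℕ, 1 ≤ N →
      (1 / (N : ℝ)) * ∑ i ∈ Finset.range N, (deriv F (t i)) ^ 2
        ≤ F (t 0) / ((N : ℝ) * (β - β ^ 2 * L / 2)) := by
  -- basic J facts
  have hMJ : M ≤ J := hJ ▸ le_max_left _ _
  have hNJ : N₀ ≤ J := hJ ▸ (le_max_left _ _).trans (le_max_right _ _)
  have hKJ : K ≤ J := hJ ▸ ((le_max_left _ _).trans (le_max_right _ _)).trans (le_max_right _ _)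
  have hSJ : S ≤ J := hJ ▸ (((le_max_left _ _).trans (le_max_right _ _)).trans
    (le_max_right _ _)).trans (le_max_right _ _)
  have hJ1 : 1 ≤ J := hJ ▸ (((le_max_right _ _).trans (le_max_right _ _)).trans
    (le_max_right _ _)).trans (le_max_right _ _)
  -- the key induction on the levels
  have key : ∀ i, 1 ≤ i → i ≤ n → ∃ d : ℝ → ℝ,
      (∀ s, HasDerivAt (X i) (d s) s) ∧
      (∀ s, |d s| ≤ (2*J)^(i-1)) ∧
      (∀ y z, |d y - d z| ≤ ((i:ℝ)-1) * (2*J)^(i-1) * |y - z|) := by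
    intro i
    induction i using Nat.strong_induction_on with
    | _ i IH =>
      intro hi1 hin
      rcases eq_or_lt_of_le hi1 with h1 | h2
      · -- i = 1
        subst h1
        refine ⟨fun _ => 1, ?_, ?_, ?_⟩
        · intro s
          have hXe : X 1 = fun u => u := funext hX1
          rw [hXe]
          exact hasDerivAt_id s
        · intro s; simp
        · intro y z; simp
      · -- 2 ≤ i
        have hi2 : 2 ≤ i := h2
        have hkv : ∀ k : Fin (i-1), k.val + 1 < i ∧ 1 ≤ k.val + 1 ∧ k.val + 1 ≤ n := by
          intro k
          have := k.isLt
          omega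
        choose dk hdk hak hbk using fun k : Fin (i-1) =>
          IH (k.val+1) (hkv k).1 (hkv k).2.1 (hkv k).2.2
        set V : ℝ → Fin (i-1) → ℝ := fun s k => X (k.val+1) s with hV
        refine ⟨fun s => ∑ k, fderiv ℝ (G i) (V s) (Pi.single k 1) * dk k s, ?_, ?_, ?_⟩
        · intro s
          have hXe : X i = fun u => G i (V u) := funext (hXi i hi2 hin)
          rw [hXe]
          exact chain_aux (G i) (hG i hi2 hin) V (fun k => dk k s) s (fun k => hdk k s)
        · intro s
          calc |∑ k, fderiv ℝ (G i) (V s) (Pi.single k 1) * dk k s|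
              ≤ ∑ k, |fderiv ℝ (G i) (V s) (Pi.single k 1) * dk k s| :=
                Finset.abs_sum_le_sum_abs _ _
            _ ≤ ∑ k : Fin (i-1), J * (2*J)^(k:ℕ) := by
                apply Finset.sum_le_sum
                intro k _
                rw [abs_mul]
                have ha := hak k s
                have hexp : k.val + 1 - 1 = k.val := by omega
                rw [hexp] at ha
                exact mul_le_mul ((hbd i hi2 hin (V s) k).trans hKJ) ha (abs_nonneg _)
                  (by linarith)
            _ = J * ∑ j ∈ Finset.range (i-1), (2*J)^j := by
                rw [Finset.mul_sum, Fin.sum_univ_eq_sum_range (fun j => J * (2*J)^j)]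
            _ ≤ (2*J)^(i-1) := aux_geom J hJ1 (i-1)
        · intro y z
          have step : ∀ k : Fin (i-1),
              |fderiv ℝ (G i) (V y) (Pi.single k 1) * dk k y
                - fderiv ℝ (G i) (V z) (Pi.single k 1) * dk k z|
              ≤ (J * (((k:ℕ):ℝ)+1) * (2*J)^(k:ℕ)) * |y - z| := by
            intro k
            set Py := fderiv ℝ (G i) (V y) (Pi.single k 1)
            set Pz := fderiv ℝ (G i) (V z) (Pi.single k 1)
            have hsplit : Py * dk k y - Pz * dk k z
                = (Py - Pz) * dk k y + Pz * (dk k y - dk k z) := by ring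
            have ha := hak k y
            have hb := hbk k y z
            have hexp : k.val + 1 - 1 = k.val := by omega
            rw [hexp] at ha hb
            have hcast : ((k.val + 1 : ℕ):ℝ) - 1 = ((k:ℕ):ℝ) := by push_cast; ring
            rw [hcast] at hb
            have hP : |Py - Pz| ≤ S * |y - z| := hlipG i hi2 hin k y z
            have hPz : |Pz| ≤ K := hbd i hi2 hin (V z) k
            calc |Py * dk k y - Pz * dk k z|
                ≤ |Py - Pz| * |dk k y| + |Pz| * |dk k y - dk k z| := by
                  rw [hsplit]
                  exact (abs_add_le _ _).trans (by rw [abs_mul, abs_mul])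
              _ ≤ (S * |y - z|) * (2*J)^(k:ℕ)
                  + K * (((k:ℕ):ℝ) * (2*J)^(k:ℕ) * |y - z|) := by
                  have t1 : |Py - Pz| * |dk k y| ≤ (S * |y - z|) * (2*J)^(k:ℕ) :=
                    mul_le_mul hP ha (abs_nonneg _) (by positivity)
                  have t2 : |Pz| * |dk k y - dk k z|
                      ≤ K * (((k:ℕ):ℝ) * (2*J)^(k:ℕ) * |y - z|) :=
                    mul_le_mul hPz hb (abs_nonneg _) hK
                  linarith
              _ ≤ (J * (((k:ℕ):ℝ)+1) * (2*J)^(k:ℕ)) * |y - z| := by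
                  have h2J : (0:ℝ) ≤ (2*J)^(k:ℕ) := by positivity
                  have hyz : (0:ℝ) ≤ |y - z| := abs_nonneg _
                  nlinarith [mul_nonneg h2J hyz, mul_nonneg (mul_nonneg
                    (Nat.cast_nonneg k.val : (0:ℝ) ≤ k.val) h2J) hyz,
                    mul_le_mul_of_nonneg_right (mul_le_mul_of_nonneg_right hSJ h2J) hyz,
                    mul_le_mul_of_nonneg_right (mul_le_mul_of_nonneg_right
                      (mul_le_mul_of_nonneg_right hKJ (Nat.cast_nonneg k.val : (0:ℝ) ≤ k.val)) h2J) hyz]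
          calc |(∑ k, fderiv ℝ (G i) (V y) (Pi.single k 1) * dk k y)
              - ∑ k, fderiv ℝ (G i) (V z) (Pi.single k 1) * dk k z|
              = |∑ k, (fderiv ℝ (G i) (V y) (Pi.single k 1) * dk k y
                  - fderiv ℝ (G i) (V z) (Pi.single k 1) * dk k z)| := by
                rw [Finset.sum_sub_distrib]
            _ ≤ ∑ k, |fderiv ℝ (G i) (V y) (Pi.single k 1) * dk k y
                  - fderiv ℝ (G i) (V z) (Pi.single k 1) * dk k z| :=
                Finset.abs_sum_le_sum_abs _ _
            _ ≤ ∑ k : Fin (i-1), (J * (((k:ℕ):ℝ)+1) * (2*J)^(k:ℕ)) * |y - z| :=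
                Finset.sum_le_sum fun k _ => step k
            _ = (J * ∑ j ∈ Finset.range (i-1), ((j:ℝ)+1) * (2*J)^j) * |y - z| := by
                rw [Finset.mul_sum, Finset.sum_mul,
                  Fin.sum_univ_eq_sum_range (fun j => J * (((j:ℕ):ℝ)+1) * (2*J)^j * |y - z|)]
                exact Finset.sum_congr rfl fun j _ => by ring
            _ ≤ (((i-1:ℕ):ℝ) * (2*J)^(i-1)) * |y - z| :=
                mul_le_mul_of_nonneg_right (aux_geom' J hJ1 (i-1)) (abs_nonneg _)
            _ = ((i:ℝ)-1) * (2*J)^(i-1) * |y - z| := by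
                have : ((i-1:ℕ):ℝ) = (i:ℝ) - 1 := by
                  have : 1 ≤ i := hi1
                  push_cast [Nat.cast_sub this]
                  ring
                rw [this]
  -- derivative of F
  have hkn : ∀ j : Fin n, 1 ≤ j.val + 1 ∧ j.val + 1 ≤ n := by
    intro j; have := j.isLt; omega
  choose df hdf haf hbf using fun j : Fin n => key (j.val+1) (hkn j).1 (hkn j).2
  set W : ℝ → Fin n → ℝ := fun s j => X (j.val+1) s with hW
  set D : ℝ → ℝ := fun s => ∑ j, fderiv ℝ f₁ (W s) (Pi.single j 1) * df j s with hD
  have hFd : ∀ s, HasDerivAt F (D s) s := by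
    intro s
    have hFe : F = fun u => f₁ (W u) := funext hF
    rw [hFe]
    exact chain_aux f₁ hf₁ W (fun j => df j s) s (fun j => hdf j s)
  have hderiv : ∀ s, deriv F s = D s := fun s => (hFd s).deriv
  -- Lipschitz bound for D
  have hDlip : ∀ y z, |D y - D z| ≤ ((n:ℝ) * (2*J)^n) * |y - z| := by
    intro y z
    have step : ∀ j : Fin n,
        |fderiv ℝ f₁ (W y) (Pi.single j 1) * df j y
          - fderiv ℝ f₁ (W z) (Pi.single j 1) * df j z|
        ≤ (J * (((j:ℕ):ℝ)+1) * (2*J)^(j:ℕ)) * |y - z| := by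
      intro j
      set Py := fderiv ℝ f₁ (W y) (Pi.single j 1)
      set Pz := fderiv ℝ f₁ (W z) (Pi.single j 1)
      have hsplit : Py * df j y - Pz * df j z
          = (Py - Pz) * df j y + Pz * (df j y - df j z) := by ring
      have ha := haf j y
      have hb := hbf j y z
      have hexp : j.val + 1 - 1 = j.val := by omega
      rw [hexp] at ha hb
      have hcast : ((j.val + 1 : ℕ):ℝ) - 1 = ((j:ℕ):ℝ) := by push_cast; ring
      rw [hcast] at hb
      have hP : |Py - Pz| ≤ M * |y - z| := hlipf j y z
      have hPz : |Pz| ≤ N₀ := hbdf (W z) j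
      calc |Py * df j y - Pz * df j z|
          ≤ |Py - Pz| * |df j y| + |Pz| * |df j y - df j z| := by
            rw [hsplit]
            exact (abs_add_le _ _).trans (by rw [abs_mul, abs_mul])
        _ ≤ (M * |y - z|) * (2*J)^(j:ℕ)
            + N₀ * (((j:ℕ):ℝ) * (2*J)^(j:ℕ) * |y - z|) := by
            have t1 : |Py - Pz| * |df j y| ≤ (M * |y - z|) * (2*J)^(j:ℕ) :=
              mul_le_mul hP ha (abs_nonneg _) (by positivity)
            have t2 : |Pz| * |df j y - df j z|
                ≤ N₀ * (((j:ℕ):ℝ) * (2*J)^(j:ℕ) * |y - z|) :=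
              mul_le_mul hPz hb (abs_nonneg _) hN₀
            linarith
        _ ≤ (J * (((j:ℕ):ℝ)+1) * (2*J)^(j:ℕ)) * |y - z| := by
            have h2J : (0:ℝ) ≤ (2*J)^(j:ℕ) := by positivity
            have hyz : (0:ℝ) ≤ |y - z| := abs_nonneg _
            nlinarith [mul_nonneg h2J hyz,
              mul_le_mul_of_nonneg_right (mul_le_mul_of_nonneg_right hMJ h2J) hyz,
              mul_le_mul_of_nonneg_right (mul_le_mul_of_nonneg_right
                (mul_le_mul_of_nonneg_right hNJ (Nat.cast_nonneg j.val : (0:ℝ) ≤ j.val)) h2J) hyz]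
    calc |D y - D z|
        = |∑ j, (fderiv ℝ f₁ (W y) (Pi.single j 1) * df j y
            - fderiv ℝ f₁ (W z) (Pi.single j 1) * df j z)| := by
          rw [hD, Finset.sum_sub_distrib]
      _ ≤ ∑ j, |fderiv ℝ f₁ (W y) (Pi.single j 1) * df j y
            - fderiv ℝ f₁ (W z) (Pi.single j 1) * df j z| :=
          Finset.abs_sum_le_sum_abs _ _
      _ ≤ ∑ j : Fin n, (J * (((j:ℕ):ℝ)+1) * (2*J)^(j:ℕ)) * |y - z| :=
          Finset.sum_le_sum fun j _ => step j
      _ = (J * ∑ j ∈ Finset.range n, ((j:ℝ)+1) * (2*J)^j) * |y - z| := by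
          rw [Finset.mul_sum, Finset.sum_mul,
            Fin.sum_univ_eq_sum_range (fun j => J * (((j:ℕ):ℝ)+1) * (2*J)^j * |y - z|)]
          exact Finset.sum_congr rfl fun j _ => by ring
      _ ≤ ((n:ℝ) * (2*J)^n) * |y - z| :=
          mul_le_mul_of_nonneg_right (aux_geom' J hJ1 n) (abs_nonneg _)
  -- comparison with L
  have hn2 : (2:ℝ) ≤ (n:ℝ) := by exact_mod_cast hn
  have hcmp : (n:ℝ) * (2*J)^n ≤ L := by
    have e1 : (2:ℝ)^n ≤ (n:ℝ)^n := pow_le_pow_left₀ (by norm_num) hn2 n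
    have e2 : J^n ≤ J^(n+1) := pow_le_pow_right₀ hJ1 (Nat.le_succ n)
    calc (n:ℝ) * (2*J)^n = (n:ℝ) * (2^n * J^n) := by rw [mul_pow]
      _ ≤ (n:ℝ) * ((n:ℝ)^n * J^(n+1)) := by
          apply mul_le_mul_of_nonneg_left _ (by positivity)
          exact mul_le_mul e1 e2 (by positivity) (by positivity)
      _ = L := by rw [hL, pow_succ]; ring
  have hL0 : (0:ℝ) < L := by
    rw [hL]
    have : (0:ℝ) < (n:ℝ) := by linarith
    positivity
  have hDlipL : ∀ y z, |D y - D z| ≤ L * |y - z| := fun y z =>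
    (hDlip y z).trans (mul_le_mul_of_nonneg_right hcmp (abs_nonneg _))
  -- descent step
  have hc : 0 < β - β^2 * L / 2 := by
    have hβL : β * L < 2 := (lt_div_iff₀ hL0).mp hβ'
    nlinarith
  have step : ∀ k, F (t (k+1)) ≤ F (t k) - (β - β^2*L/2) * (D (t k))^2 := by
    intro k
    have e : t (k+1) - t k = -(β * D (t k)) := by rw [ht k, hderiv]; ring
    have hd := descent_aux F D L hFd hDlipL (t k) (t (k+1))
    rw [e] at hd
    nlinarith [hd]
  have tele : ∀ N : ℕ, (β - β^2*L/2) * ∑ i ∈ Finset.range N, (D (t i))^2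
      ≤ F (t 0) - F (t N) := by
    intro N
    induction N with
    | zero => simp
    | succ N ih =>
      rw [Finset.sum_range_succ, mul_add]
      have := step N
      linarith
  intro N hN
  have hFN : 0 ≤ F (t N) := by rw [hF]; exact hf₁0 _
  have hsum : ∑ i ∈ Finset.range N, (deriv F (t i))^2 = ∑ i ∈ Finset.range N, (D (t i))^2 :=
    Finset.sum_congr rfl fun i _ => by rw [hderiv]
  have h1 : (β - β^2*L/2) * ∑ i ∈ Finset.range N, (D (t i))^2 ≤ F (t 0) := by
    have := tele N
    linarith
  have hNpos : (0:ℝ) < (N:ℝ) := by exact_mod_cast Nat.lt_of_lt_of_le Nat.zero_lt_one hN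
  rw [hsum]
  have h2 : ∑ i ∈ Finset.range N, (D (t i))^2 ≤ F (t 0) / (β - β^2*L/2) :=
    (le_div_iff₀ hc).mpr (by linarith [h1])
  calc (1/(N:ℝ)) * ∑ i ∈ Finset.range N, (D (t i))^2
      ≤ (1/(N:ℝ)) * (F (t 0) / (β - β^2*L/2)) := by
        apply mul_le_mul_of_nonneg_left h2 (by positivity)
    _ = F (t 0) / ((N:ℝ) * (β - β^2*L/2)) := by
        rw [div_mul_div_comm, one_mul]
end

section
/- Consider an n-level hierarchical system: an integer n ≥ 2, continuously differentiable functions G_i : ℝ^{i-1} → ℝ for 2 ≤ i ≤ n, and trajectory functions X_1, ..., X_n : ℝ → ℝ defined by X_1(t) = t and X_i(t) = G_i(X_1(t), ..., X_{i-1}(t)); write ∂x_i/∂x_j(t) for the j-th partial derivative of G_i evaluated at (X_1(t), ..., X_{i-1}(t)). Then for every 2 ≤ i ≤ n and every t ∈ ℝ, the total derivative of X_i admits the path-sum expansion X_i'(t) = ∑_P ∏_{j=0}^{k-1} ∂x_{p_{j+1}}/∂x_{p_j}(t), where the sum ranges over all strictly increasing finite sequences P = (p_0, p_1, ..., p_k)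 of integers with k ≥ 1, p_0 = 1, and p_k = i. -/
/-- The partial derivative `∂x_i/∂x_j (t)` of the level-`i` best response `G i`
with respect to its `j`-th argument (levels are `1`-based), evaluated along the
trajectory `(X 1 t, …, X (i-1) t)`; junk value `0` when `j - 1 ≥ i - 1`. -/
noncomputable def partialDeriv' (G : (i : ℕ) → (Fin (i - 1) → ℝ) → ℝ)
    (X : ℕ → ℝ → ℝ) (i j : ℕ) (t : ℝ) : ℝ :=
  if h : j - 1 < i - 1 then
    fderiv ℝ (G i) (fun k : Fin (i - 1) => X (k.val + 1) t) (Pi.single ⟨j - 1, h⟩ 1)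
  else 0

/-- The product `∏_{j=0}^{k-1} ∂x_{p_{j+1}}/∂x_{p_j} (t)` along the strictly
increasing path whose vertex set is the finset `s`, i.e. the product of
`partialDeriv'` over consecutive pairs of the sorted list of `s`. -/
noncomputable def pathProduct (G : (i : ℕ) → (Fin (i - 1) → ℝ) → ℝ)
    (X : ℕ → ℝ → ℝ) (s : Finset ℕ) (t : ℝ) : ℝ :=
  let l := Finset.sort s (· ≤ ·)
  ((l.zip l.tail).map (fun p => partialDeriv' G X p.2 p.1 t)).prod

/-- Sorting a finset after inserting an element strictly larger than all
current elements appends that element at the end. -/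
lemma sort_insert_max (s : Finset ℕ) (a : ℕ) (h : ∀ b ∈ s, b < a) :
    (insert a s).sort (· ≤ ·) = s.sort (· ≤ ·) ++ [a] := by
  have ha : a ∉ s := fun hm => absurd (h a hm) (lt_irrefl a)
  apply List.Perm.eq_of_pairwise' (r := (· ≤ ·)) (Finset.pairwise_sort _ _) ?_ ?_
  · rw [List.pairwise_append]
    refine ⟨Finset.pairwise_sort _ _, List.pairwise_singleton _ a, ?_⟩
    intro b hb c hc
    simp only [List.mem_singleton] at hc; subst hc
    exact (h b ((Finset.mem_sort _).1 hb)).le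
  · rw [← Multiset.coe_eq_coe]
    simp only [← Multiset.coe_add, Finset.sort_eq, Finset.insert_val,
      Multiset.ndinsert_of_notMem (by simpa), Finset.sort_eq]
    simp [Multiset.singleton_add]
    rw [add_comm]
    simp [Multiset.singleton_add]

/-- Product over consecutive pairs of a list with one element appended. -/
lemma listProd_append (f : ℕ × ℕ → ℝ) :
    ∀ (l : List ℕ) (x a : ℕ),
      ((((x :: l) ++ [a]).zip (((x :: l) ++ [a]).tail)).map f).prod
        = (((x :: l).zip l).map f).prod * f ((x :: l).getLast (by simp), a) := by
  intro l
  induction l with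
  | nil => intro x a; simp
  | cons y l ih =>
      intro x a
      have := ih y a
      simp only [List.cons_append, List.tail_cons, List.zip_cons_cons,
        List.map_cons, List.prod_cons] at this ⊢
      rw [this]
      ring_nf
      congr 1

/-- `pathProduct` after inserting a new maximum. -/
lemma pathProduct_insert_max (G : (i : ℕ) → (Fin (i - 1) → ℝ) → ℝ)
    (X : ℕ → ℝ → ℝ) (t : ℝ) (u : Finset ℕ) (a j : ℕ)
    (hj : j ∈ u) (hmax : ∀ b ∈ u, b ≤ j) (hlt : ∀ b ∈ u, b < a) :
    pathProduct G X (insert a u) t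
      = pathProduct G X u t * partialDeriv' G X a j t := by
  have hne : u.Nonempty := ⟨j, hj⟩
  have hs : (insert a u).sort (· ≤ ·) = u.sort (· ≤ ·) ++ [a] :=
    sort_insert_max u a hlt
  have hne' : u.sort (· ≤ ·) ≠ [] := by
    apply List.ne_nil_of_length_pos
    rw [Finset.length_sort]
    exact Finset.card_pos.mpr hne
  obtain ⟨x, l, hl⟩ : ∃ x l, u.sort (· ≤ ·) = x :: l := by
    rcases List.exists_cons_of_ne_nil hne' with ⟨x, l, h⟩
    exact ⟨x, l, h⟩
  have hlast : (x :: l).getLast (by simp) = j := by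
    have h1 : u.max' hne = j :=
      le_antisymm (Finset.max'_le _ _ _ hmax) (Finset.le_max' _ _ hj)
    have h2 := Finset.max'_eq_sorted_last (s := u) (h := hne)
    rw [h1] at h2
    simp only [hl] at h2
    simp only [List.getLast_eq_getElem]
    rw [← h2]
  unfold pathProduct
  simp only [hs, hl]
  rw [listProd_append, hlast]
  rfl

/-- **Path-sum expansion of the total derivative `dx_i/dx_1` (Equation (2)).**
In an `n`-level hierarchical system with `X 1 t = t` and
`X i t = G i (X 1 t, …, X (i-1) t)`, the total derivative of `X i` equals the
sum, over all strictly increasing paths `1 = p_0 < p_1 < ⋯ < p_k = i` (`k ≥ 1`,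
equivalently over all subsets of the open interval `(1, i)` of intermediate
vertices), of the products of the partial derivatives along the path. -/
theorem total_derivative_path_sum
    (n : ℕ) (hn : 2 ≤ n)
    (G : (i : ℕ) → (Fin (i - 1) → ℝ) → ℝ)
    (hG : ∀ i, 2 ≤ i → i ≤ n → ContDiff ℝ 1 (G i))
    (X : ℕ → ℝ → ℝ)
    (hX1 : ∀ t, X 1 t = t)
    (hXi : ∀ i, 2 ≤ i → i ≤ n → ∀ t,
      X i t = G i (fun k : Fin (i - 1) => X (k.val + 1) t)) :
    ∀ i, 2 ≤ i → i ≤ n → ∀ t : ℝ,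
      deriv (X i) t
        = ∑ s ∈ (Finset.Ioo 1 i).powerset,
            pathProduct G X (insert 1 (insert i s)) t := by
  -- Differentiability of each trajectory
  have hX1' : X 1 = fun t => t := funext hX1
  have hdiff : ∀ j, 1 ≤ j → j ≤ n → Differentiable ℝ (X j) := by
    intro j
    induction j using Nat.strong_induction_on with
    | _ j ih =>
      intro h1 hjn
      rcases eq_or_lt_of_le h1 with h | h
      · rw [← h, hX1']; exact differentiable_id
      · have h2 : 2 ≤ j := h
        have hXj : X j = fun t => G j (fun k : Fin (j - 1) => X (k.val + 1) t) :=
          funext (hXi j h2 hjn)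
        rw [hXj]
        exact ((hG j h2 hjn).differentiable one_ne_zero).comp
          (differentiable_pi.mpr fun k =>
            ih (k.val + 1) (by omega) (by omega) (by omega))
  -- Chain rule: one step expansion
  have key : ∀ i, 2 ≤ i → i ≤ n → ∀ t : ℝ,
      deriv (X i) t
        = ∑ k : Fin (i - 1),
            partialDeriv' G X i (k.val + 1) t * deriv (X (k.val + 1)) t := by
    intro i h2 hin t
    set Y : ℝ → (Fin (i - 1) → ℝ) := fun t => fun k => X (k.val + 1) t with hY
    set v : Fin (i - 1) → ℝ := fun k => deriv (X (k.val + 1)) t with hv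
    have hYd : HasDerivAt Y v t := by
      rw [hasDerivAt_pi]
      intro k
      exact ((hdiff (k.val + 1) (by omega) (by omega)) t).hasDerivAt
    have hF : HasFDerivAt (G i) (fderiv ℝ (G i) (Y t)) (Y t) :=
      (((hG i h2 hin).differentiable one_ne_zero) (Y t)).hasFDerivAt
    have hcomp : HasDerivAt (fun t => G i (Y t)) (fderiv ℝ (G i) (Y t) v) t :=
      hF.comp_hasDerivAt t hYd
    have hXieq : X i = fun t => G i (Y t) := funext (hXi i h2 hin)
    rw [hXieq, hcomp.deriv]
    have hvsum : v = ∑ k : Fin (i - 1), v k • (Pi.single k 1 : Fin (i - 1) → ℝ) := by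
      funext m
      simp [Finset.sum_apply, Pi.single_apply]
    conv_lhs => rw [hvsum]
    rw [map_sum]
    apply Finset.sum_congr rfl
    intro k _
    rw [map_smul]
    have hk : (k.val + 1) - 1 < i - 1 := by omega
    have : partialDeriv' G X i (k.val + 1) t
        = fderiv ℝ (G i) (Y t) (Pi.single ⟨(k.val + 1) - 1, hk⟩ 1) := by
      rw [partialDeriv', dif_pos hk]
    rw [this]
    have hkk : (⟨(k.val + 1) - 1, hk⟩ : Fin (i - 1)) = k := by
      ext; simp
    rw [hkk]
    simp [smul_eq_mul, mul_comm, hv]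
  -- Main statement, including the degenerate level 1
  suffices Q : ∀ i, 1 ≤ i → i ≤ n → ∀ t : ℝ,
      deriv (X i) t
        = ∑ s ∈ (Finset.Ioo 1 i).powerset,
            pathProduct G X (insert 1 (insert i s)) t by
    intro i h2 hin t
    exact Q i (by omega) hin t
  intro i
  induction i using Nat.strong_induction_on with
  | _ i ih =>
    intro h1 hin t
    rcases eq_or_lt_of_le h1 with h | h
    · -- i = 1
      subst h
      rw [hX1']
      simp [pathProduct, Finset.Ioo_self]
    · have h2 : 2 ≤ i := h
      rw [key i h2 hin t]
      -- fiberwise decomposition of the RHS by the largest vertex below i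
      have hi1 : (1 : ℕ) < i - 1 + 1 := by omega
      set g : Finset ℕ → Fin (i - 1) :=
        fun s => ⟨min ((insert 1 s).max' ⟨1, Finset.mem_insert_self 1 s⟩ - 1) (i - 2),
          by omega⟩ with hg
      have hmaps : ∀ s ∈ (Finset.Ioo 1 i).powerset, g s ∈ (Finset.univ : Finset (Fin (i-1))) :=
        fun s _ => Finset.mem_univ _
      rw [← Finset.sum_fiberwise_of_maps_to hmaps]
      apply Finset.sum_congr rfl
      intro k _
      -- for each fiber, a bijection with the powerset of `Ioo 1 (k+1)`
      rw [ih (k.val + 1) (by omega) (by omega) (by omega) t, mul_comm, Finset.sum_mul]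
      apply Finset.sum_nbij' (i := fun s' => (insert (k.val + 1) s').erase 1)
        (j := fun s => s.erase (k.val + 1))
      · -- maps into the fiber
        intro s' hs'
        rw [Finset.mem_powerset] at hs'
        have hsub : ∀ b ∈ s', 1 < b ∧ b < k.val + 1 := by
          intro b hb
          have := hs' hb
          rw [Finset.mem_Ioo] at this
          exact this
        rw [Finset.mem_filter, Finset.mem_powerset]
        constructor
        · intro b hb
          rw [Finset.mem_erase, Finset.mem_insert] at hb
          rcases hb.2 with hbk | hbs
          · subst hbk
            rw [Finset.mem_Ioo]
            have := hb.1
            constructor <;> omega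
          · rcases hsub b hbs with ⟨hb1, hb2⟩
            rw [Finset.mem_Ioo]
            constructor <;> omega
        · -- g of the image is k
          have hmem : (k.val + 1) ∈ insert 1 ((insert (k.val + 1) s').erase 1) := by
            by_cases hk0 : k.val = 0
            · simp [hk0]
            · apply Finset.mem_insert_of_mem
              rw [Finset.mem_erase]
              exact ⟨by omega, Finset.mem_insert_self _ _⟩
          have hle : ∀ b ∈ insert 1 ((insert (k.val + 1) s').erase 1), b ≤ k.val + 1 := by
            intro b hb
            rw [Finset.mem_insert] at hb
            rcases hb with hb | hb
            · omega
            · rw [Finset.mem_erase, Finset.mem_insert] at hb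
              rcases hb.2 with hb' | hb'
              · omega
              · exact (hsub b hb').2.le
          have hmax : (insert 1 ((insert (k.val + 1) s').erase 1)).max'
              ⟨1, Finset.mem_insert_self _ _⟩ = k.val + 1 :=
            le_antisymm (Finset.max'_le _ _ _ hle) (Finset.le_max' _ _ hmem)
          rw [hg]
          ext
          simp only [hmax]
          omega
      · -- inverse maps into the powerset
        intro s hs
        rw [Finset.mem_filter, Finset.mem_powerset] at hs
        obtain ⟨hsub, hgs⟩ := hs
        have hsub' : ∀ b ∈ s, 1 < b ∧ b < i := by
          intro b hb; have := hsub hb; rw [Finset.mem_Ioo] at this; exact this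
        have hmle : ∀ b ∈ insert 1 s, b ≤ i - 1 := by
          intro b hb
          rw [Finset.mem_insert] at hb
          rcases hb with hb | hb
          · omega
          · have := (hsub' b hb).2; omega
        set m := (insert 1 s).max' ⟨1, Finset.mem_insert_self 1 s⟩ with hm
        have hm1 : 1 ≤ m := Finset.le_max' _ _ (Finset.mem_insert_self 1 s)
        have hmi : m ≤ i - 1 := Finset.max'_le _ _ _ hmle
        have hmk : m = k.val + 1 := by
          have : (⟨min (m - 1) (i - 2), by omega⟩ : Fin (i-1)) = k := hgs
          have := congrArg Fin.val this
          simp at this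
          omega
        rw [Finset.mem_powerset]
        intro b hb
        rw [Finset.mem_erase] at hb
        have hbm : b ≤ m := Finset.le_max' _ _ (Finset.mem_insert_of_mem hb.2)
        rw [Finset.mem_Ioo]
        have := (hsub' b hb.2).1
        constructor
        · omega
        · omega
      · -- left inverse
        intro s' hs'
        rw [Finset.mem_powerset] at hs'
        have h1s : 1 ∉ s' := fun hmem => by
          have := hs' hmem; rw [Finset.mem_Ioo] at this; omega
        have hks : (k.val + 1) ∉ s' := fun hmem => by
          have := hs' hmem; rw [Finset.mem_Ioo] at this; omega
        ext b
        simp only [Finset.mem_erase, Finset.mem_insert]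
        constructor
        · rintro ⟨hbk, hb1, hbk' | hbs⟩
          · omega
          · exact hbs
        · intro hb
          refine ⟨fun hc => hks (hc ▸ hb), fun hc => h1s (hc ▸ hb), Or.inr hb⟩
      · -- right inverse
        intro s hs
        rw [Finset.mem_filter, Finset.mem_powerset] at hs
        obtain ⟨hsub, hgs⟩ := hs
        have hsub' : ∀ b ∈ s, 1 < b ∧ b < i := by
          intro b hb; have := hsub hb; rw [Finset.mem_Ioo] at this; exact this
        have hmle : ∀ b ∈ insert 1 s, b ≤ i - 1 := by
          intro b hb
          rw [Finset.mem_insert] at hb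
          rcases hb with hb | hb
          · omega
          · have := (hsub' b hb).2; omega
        set m := (insert 1 s).max' ⟨1, Finset.mem_insert_self 1 s⟩ with hm
        have hm1 : 1 ≤ m := Finset.le_max' _ _ (Finset.mem_insert_self 1 s)
        have hmi : m ≤ i - 1 := Finset.max'_le _ _ _ hmle
        have hmk : m = k.val + 1 := by
          have : (⟨min (m - 1) (i - 2), by omega⟩ : Fin (i-1)) = k := hgs
          have := congrArg Fin.val this
          simp at this
          omega
        have hmem_m : m ∈ insert 1 s := Finset.max'_mem _ _
        ext b
        simp only [Finset.mem_erase, Finset.mem_insert]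
        constructor
        · rintro ⟨hb1, hbk | ⟨hbk, hbs⟩⟩
          · -- b = k+1 : show k+1 ∈ s
            subst hbk
            rw [Finset.mem_insert] at hmem_m
            rcases hmem_m with hm' | hm'
            · omega
            · rwa [← hmk]
          · exact hbs
        · intro hb
          have := (hsub' b hb).1
          exact ⟨by omega, if hc : b = k.val + 1 then Or.inl hc else Or.inr ⟨hc, hb⟩⟩
      · -- values agree
        intro s' hs'
        rw [Finset.mem_powerset] at hs'
        have hsub : ∀ b ∈ s', 1 < b ∧ b < k.val + 1 := by
          intro b hb; have := hs' hb; rw [Finset.mem_Ioo] at this; exact this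
        have hins : insert 1 (insert i ((insert (k.val + 1) s').erase 1))
            = insert i (insert 1 (insert (k.val + 1) s')) := by
          ext b
          simp only [Finset.mem_insert, Finset.mem_erase]
          constructor
          · rintro (h | h | ⟨hb1, h | h⟩) <;> tauto
          · rintro (h | h | h | h)
            · tauto
            · tauto
            · by_cases hb1 : b = 1
              · tauto
              · subst h; right; right; exact ⟨hb1, Or.inl rfl⟩
            · have := (hsub b h).1
              right; right; exact ⟨by omega, Or.inr h⟩
        rw [hins]
        rw [pathProduct_insert_max G X t _ i (k.val + 1)
          (Finset.mem_insert_of_mem (Finset.mem_insert_self _ _))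
          (by
            intro b hb
            rw [Finset.mem_insert, Finset.mem_insert] at hb
            rcases hb with hb | hb | hb
            · omega
            · omega
            · exact (hsub b hb).2.le)
          (by
            intro b hb
            rw [Finset.mem_insert, Finset.mem_insert] at hb
            have hki : k.val + 1 < i := by omega
            rcases hb with hb | hb | hb
            · omega
            · omega
            · have := (hsub b hb).2; omega)]
end
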